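/- arXiv:1209.1242 — 2 statements merged into one kernel-verified Lean document; each statement's English description precedes it below -/
import Mathlib

section
/- Let G be a group, n ≥ 3, E the set of idempotents of End F_n(G), and IG(E) the free idempotent generated monoid over E. Let u ∈ G and let a, b : {1,…,n} → G with a(1) = b(1) = 1 and indices j, k ∈ {1,…,n} satisfy a(j) = u⁻¹ and b(k) = u. Then in IG(E): (ē_{11} ē_{a,j} ē_{11})(ē_{11} ē_{b,k} ē_{11}) = ē_{11} and (ē_{11} ē_{b,k} ē_{11})(ē_{11} ē_{a,j} ē_{11}) = ē_{11}. (Writing w_u = ē_{11} ē_{a,j} ē_{11} for any choice with a(j) = u⁻¹, this says w_u⁻¹ = w_{u⁻¹} in the maximal subgroup of IG(E) at ē_{11}.) -/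
/-- An endomorphism of the rank-`n` free left `G`-act `F_n(G) = G × Fin n`
(the formal symbols `g x_i` are the pairs `(g, i)`), where the action is
`h • (g, i) = (h * g, i)` and equivariance says `(h • x) a = h • (x a)`. -/
structure ActEnd (G : Type*) [Group G] (n : ℕ) : Type _ where
  toFun : G × Fin n → G × Fin n
  equivariant : ∀ (h : G) (x : G × Fin n),
    toFun (h * x.1, x.2) = (h * (toFun x).1, (toFun x).2)

namespace ActEnd

variable {G : Type*} [Group G] {n : ℕ}

/-- Composition is written left-to-right: `x (a * b) = (x a) b`. -/
instance : Monoid (ActEnd G n) where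
  mul a b := ⟨fun x => b.toFun (a.toFun x), by
    intro h x
    try dsimp only
    rw [a.equivariant h x, b.equivariant]⟩
  one := ⟨id, fun _ _ => rfl⟩
  mul_assoc _ _ _ := rfl
  one_mul _ := rfl
  mul_one _ := rfl

@[simp] theorem mul_toFun (a b : ActEnd G n) (x : G × Fin n) :
    (a * b).toFun x = b.toFun (a.toFun x) := rfl

theorem ext' {a b : ActEnd G n} (h : a.toFun = b.toFun) : a = b := by
  cases a; cases b; cases h; rfl

/-- The rank of an endomorphism of `F_n(G)`: the number of indices `j` such
that `G x_j` meets the image. -/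
noncomputable def rank (a : ActEnd G n) : ℕ :=
  Nat.card {j : Fin n // ∃ x, (a.toFun x).2 = j}

end ActEnd

namespace ActEnd

variable {G : Type*} [Group G] {n : ℕ}

/-- The rank-1 idempotent `e_{a,j}` given by `(g x_t) e_{a,j} = (g * a t * (a j)⁻¹) x_j`.
Taking `a` constantly `1` gives `e_{1j}`, and also `j = 0` gives `e_{11}`
(indices `1, …, n` are realised as `Fin n`, with `1 ↦ 0`). -/
def eaj (a : Fin n → G) (j : Fin n) : ActEnd G n :=
  ⟨fun x => (x.1 * a x.2 * (a j)⁻¹, j), by intro h x; simp [mul_assoc]⟩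

theorem eaj_idem (a : Fin n → G) (j : Fin n) : eaj a j * eaj a j = eaj a j := by
  apply ext'
  funext x
  simp [eaj, mul_assoc]

/-- The map `a_g : g' x_t ↦ (g' * g) x_1`. -/
def aMap (g : G) (h0 : 0 < n) : ActEnd G n :=
  ⟨fun x => (x.1 * g, ⟨0, h0⟩), by intro h x; simp [mul_assoc]⟩

end ActEnd

/-- The principal left ideal `M a` of `a`. -/
def lIdeal {M : Type*} [Monoid M] (a : M) : Set M := Set.range fun m => m * a

/-- The principal right ideal `a M` of `a`. -/
def rIdeal {M : Type*} [Monoid M] (a : M) : Set M := Set.range fun m => a * m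

/-- The `H`-class of `e`: all elements that are both `L`- and `R`-related to `e`. -/
def hClass {M : Type*} [Monoid M] (e : M) : Set M :=
  {a | lIdeal a = lIdeal e ∧ rIdeal a = rIdeal e}

/-- The defining relation of the free idempotent generated monoid `IG(E)`:
`ē f̄ = (e f)‾` whenever `{e, f} ∩ {e f, f e} ≠ ∅`. -/
def igRel (M : Type*) [Monoid M] :
    FreeMonoid {e : M // e * e = e} → FreeMonoid {e : M // e * e = e} → Prop :=
  fun x y => ∃ e f g : {e : M // e * e = e},
    (e.1 * f.1 = e.1 ∨ e.1 * f.1 = f.1 ∨ f.1 * e.1 = e.1 ∨ f.1 * e.1 = f.1) ∧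
    e.1 * f.1 = g.1 ∧
    x = FreeMonoid.of e * FreeMonoid.of f ∧ y = FreeMonoid.of g

/-- The free idempotent generated monoid over the biordered set of idempotents
of `M`: the presented monoid with generators `ē` for each idempotent `e` and
relations `ē f̄ = (e f)‾` whenever `{e, f} ∩ {e f, f e} ≠ ∅`. -/
abbrev IG (M : Type*) [Monoid M] : Type _ := (conGen (igRel M)).Quotient

/-- The generator `ē` of `IG(E)` corresponding to the idempotent `e`. -/
def ebar {M : Type*} [Monoid M] (e : {e : M // e * e = e}) : IG M :=
  (conGen (igRel M)).mk' (FreeMonoid.of e)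

/-- `ē_{a,j}` as an element of `IG(E)` for `E` the idempotents of `End F_n(G)`. -/
def igE {G : Type*} [Group G] {n : ℕ} (a : Fin n → G) (j : Fin n) : IG (ActEnd G n) :=
  ebar ⟨ActEnd.eaj a j, ActEnd.eaj_idem a j⟩

/-- `ē_{11}` as an element of `IG(E)`. -/
def ig11 {G : Type*} [Group G] {n : ℕ} (h0 : 0 < n) : IG (ActEnd G n) :=
  igE (fun _ => (1 : G)) ⟨0, h0⟩

namespace IGWork

variable {M : Type*} [Monoid M]

theorem ebar_basic (e f g : {e : M // e * e = e})
    (hcond : e.1 * f.1 = e.1 ∨ e.1 * f.1 = f.1 ∨ f.1 * e.1 = e.1 ∨ f.1 * e.1 = f.1)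
    (hg : e.1 * f.1 = g.1) : ebar e * ebar f = ebar g := by
  have h : (conGen (igRel M)) (FreeMonoid.of e * FreeMonoid.of f) (FreeMonoid.of g) :=
    ConGen.Rel.of _ _ ⟨e, f, g, hcond, hg, rfl, rfl⟩
  unfold ebar
  rw [← map_mul]
  exact (Con.eq _).mpr h

theorem moveR (e f K g : {e : M // e * e = e}) (h1 : e.1 * K.1 = e.1) (h2 : f.1 * K.1 = f.1)
    (h3 : K.1 * f.1 = g.1) : ebar e * ebar f = ebar e * ebar g := by
  have hek : ebar e * ebar K = ebar e := ebar_basic e K e (Or.inl h1) h1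
  have hkf : ebar K * ebar f = ebar g := ebar_basic K f g (Or.inr (Or.inr (Or.inr h2))) h3
  calc ebar e * ebar f = (ebar e * ebar K) * ebar f := by rw [hek]
    _ = ebar e * (ebar K * ebar f) := mul_assoc _ _ _
    _ = ebar e * ebar g := by rw [hkf]

theorem moveL (e f K g : {e : M // e * e = e}) (h1 : K.1 * e.1 = e.1) (h2 : K.1 * f.1 = f.1)
    (h3 : e.1 * K.1 = g.1) : ebar e * ebar f = ebar g * ebar f := by
  have hkf : ebar K * ebar f = ebar f := ebar_basic K f f (Or.inr (Or.inl h2)) h2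
  have hek : ebar e * ebar K = ebar g := ebar_basic e K g (Or.inr (Or.inr (Or.inl h1))) h3
  calc ebar e * ebar f = ebar e * (ebar K * ebar f) := by rw [hkf]
    _ = (ebar e * ebar K) * ebar f := (mul_assoc _ _ _).symm
    _ = ebar g * ebar f := by rw [hek]


variable {G : Type*} [Group G] {n : ℕ}

def gmap (m : Fin n → G) (p : Fin n → Fin n) : ActEnd G n :=
  ⟨fun x => (x.1 * m x.2, p x.2), by intro h x; simp [mul_assoc]⟩

theorem gmap_mul (m m' : Fin n → G) (p p' : Fin n → Fin n) :
    gmap m p * gmap m' p' = gmap (fun t => m t * m' (p t)) (fun t => p' (p t)) := by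
  apply ActEnd.ext'
  funext x
  show (gmap m' p').toFun ((gmap m p).toFun x) = _
  simp [gmap, mul_assoc]

theorem gmap_congr {m m' : Fin n → G} {p p' : Fin n → Fin n}
    (hm : ∀ t, m t = m' t) (hp : ∀ t, p t = p' t) : gmap m p = gmap m' p' := by
  have h1 : m = m' := funext hm
  have h2 : p = p' := funext hp
  rw [h1, h2]

def R1 (c : Fin n → G) (j : Fin n) (hc : c j = 1) : {e : ActEnd G n // e * e = e} :=
  ⟨gmap c (fun _ => j), by
    rw [gmap_mul]; exact gmap_congr (fun t => by rw [hc]; exact mul_one _) (fun t => rfl)⟩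

def K2 (m : Fin n → G) (p : Fin n → Fin n) (hp : ∀ t, p (p t) = p t)
    (hm : ∀ t, m (p t) = 1) : {e : ActEnd G n // e * e = e} :=
  ⟨gmap m p, by
    rw [gmap_mul]; exact gmap_congr (fun t => by rw [hm]; exact mul_one _) hp⟩

def eps (z : Fin n) : {e : ActEnd G n // e * e = e} := R1 (fun _ => 1) z rfl

@[simp] theorem R1_val (c : Fin n → G) (j : Fin n) (hc : c j = 1) :
    (R1 c j hc).1 = gmap c (fun _ => j) := rfl

@[simp] theorem K2_val (m : Fin n → G) (p : Fin n → Fin n) (hp : ∀ t, p (p t) = p t)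
    (hm : ∀ t, m (p t) = 1) : (K2 m p hp hm).1 = gmap m p := rfl

@[simp] theorem eps_val (z : Fin n) :
    (eps (G := G) z).1 = gmap (fun _ => (1:G)) (fun _ => z) := rfl

def cf (u : G) (z : Fin n) (t : Fin n) : G := if t = z then u else 1
def df (u : G) (k : Fin n) (t : Fin n) : G := if t = k then 1 else u⁻¹
def d3f (u : G) (z k : Fin n) (t : Fin n) : G := if t = z then 1 else if t = k then 1 else u⁻¹
def d5f (v : G) (k l : Fin n) (t : Fin n) : G := if t = k then 1 else if t = l then 1 else v
def qf (x y t : Fin n) : Fin n := if t = x then x else y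
def pf (x y t : Fin n) : Fin n := if t = x then y else t

theorem qf_idem (x y t : Fin n) : qf x y (qf x y t) = qf x y t := by
  unfold qf; split_ifs <;> simp_all

theorem pf_idem (x y t : Fin n) : pf x y (pf x y t) = pf x y t := by
  unfold pf; split_ifs <;> simp_all

theorem epsE (z : Fin n) :
    ebar (eps (G := G) z) * ebar (eps z) = ebar (eps z) :=
  ebar_basic _ _ _ (Or.inl (eps z).2) (eps z).2


theorem lemA (z j : Fin n) (c : Fin n → G) (hcz : c z = 1) (hcj : c j = 1) :
    ebar (eps z) * ebar (R1 c j hcj) * ebar (eps z) = ebar (eps z) := by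
  by_cases hj : j = z
  · subst hj
    have hp : (eps (G := G) j).1 * (R1 c j hcj).1 = (eps j).1 := by
      simp only [eps_val, R1_val, gmap_mul]
      exact gmap_congr (fun t => by simp [hcj]) (fun t => rfl)
    have h1 : ebar (eps j) * ebar (R1 c j hcj) = ebar (eps j) :=
      ebar_basic _ _ _ (Or.inl hp) hp
    rw [h1, epsE]
  · have hM : ebar (R1 c j hcj) * ebar (eps z) = ebar (R1 c z hcz) * ebar (eps z) :=
      moveL _ _ (K2 (fun _ => 1) (pf j z) (pf_idem j z) (fun _ => rfl)) _
        (by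
        simp only [eps_val, R1_val, K2_val, gmap_mul]
        exact gmap_congr
              (fun t => by by_cases h1 : t = j <;> simp [pf, h1, hcz, hcj])
              (fun t => rfl))
        (by
        simp only [eps_val, R1_val, K2_val, gmap_mul]
        exact gmap_congr (fun t => by simp) (fun t => rfl))
        (by
        simp only [eps_val, R1_val, K2_val, gmap_mul]
        exact gmap_congr (fun t => by simp) (fun t => by simp [pf]))
    have h2 : ebar (R1 c z hcz) * ebar (eps z) = ebar (R1 c z hcz) := by
      have hp : (R1 c z hcz).1 * (eps (G := G) z).1 = (R1 c z hcz).1 := by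
        simp only [eps_val, R1_val, gmap_mul]
        exact gmap_congr (fun t => by simp) (fun t => rfl)
      exact ebar_basic _ _ _ (Or.inl hp) hp
    have h3 : ebar (eps z) * ebar (R1 c z hcz) = ebar (eps z) := by
      have hp : (eps (G := G) z).1 * (R1 c z hcz).1 = (eps z).1 := by
        simp only [eps_val, R1_val, gmap_mul]
        exact gmap_congr (fun t => by simp [hcz]) (fun t => rfl)
      exact ebar_basic _ _ _ (Or.inl hp) hp
    calc ebar (eps z) * ebar (R1 c j hcj) * ebar (eps z)
        = ebar (eps z) * (ebar (R1 c j hcj) * ebar (eps z)) := mul_assoc _ _ _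
      _ = ebar (eps z) * (ebar (R1 c z hcz) * ebar (eps z)) := by rw [hM]
      _ = ebar (eps z) * ebar (R1 c z hcz) := by rw [h2]
      _ = ebar (eps z) := h3


theorem master (u : G) (z j k : Fin n)
    (hjz : j ≠ z) (hkz : k ≠ z) (hjk : j ≠ k)
    (c₀ d₀ : Fin n → G) (hc₀j : c₀ j = 1) (hd₀k : d₀ k = 1)
    (hc₀z : c₀ z = u) (hd₀z : d₀ z = u⁻¹) :
    (ebar (eps z) * ebar (R1 c₀ j hc₀j) * ebar (eps z)) *
      (ebar (eps z) * ebar (R1 d₀ k hd₀k) * ebar (eps z)) = ebar (eps z) := by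
  have hzj := Ne.symm hjz
  have hzk := Ne.symm hkz
  have hkj := Ne.symm hjk
  have hcj : cf u z j = 1 := by simp [cf, hjz]
  have hck : cf u z k = 1 := by simp [cf, hkz]
  have hdk : df u k k = 1 := by simp [df]
  have hd3k : d3f u z k k = 1 := by simp [d3f, hkz]
  have hd3z : d3f u z k z = 1 := by simp [d3f]
  have hd4z : df u z z = 1 := by simp [df]
  have hone : (fun _ : Fin n => (1:G)) j = 1 := rfl
  have hm5 : ∀ t, cf u z (qf k j t) = 1 := by
    intro t; by_cases h1 : t = z <;> by_cases h2 : t = j <;> by_cases h3 : t = k <;> simp [cf, df, d3f, qf, pf, h1, h2, h3, hjz, hkz, hjk, hzj, hzk, hkj, hc₀j, hc₀z, hd₀k, hd₀z]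
  have hM1 : ebar (eps z) * ebar (R1 c₀ j hc₀j)
      = ebar (eps z) * ebar (R1 (cf u z) j hcj) :=
    moveR _ _ (K2 (fun _ => 1) (qf z j) (qf_idem z j) (fun _ => rfl)) _
      (by
        simp only [eps_val, R1_val, K2_val, gmap_mul]
        exact gmap_congr (fun t => by by_cases h1 : t = z <;> by_cases h2 : t = j <;> by_cases h3 : t = k <;> simp [cf, df, d3f, qf, pf, h1, h2, h3, hjz, hkz, hjk, hzj, hzk, hkj, hc₀j, hc₀z, hd₀k, hd₀z])
              (fun t => by by_cases h1 : t = z <;> by_cases h2 : t = j <;> by_cases h3 : t = k <;> simp [cf, df, d3f, qf, pf, h1, h2, h3, hjz, hkz, hjk, hzj, hzk, hkj, hc₀j, hc₀z, hd₀k, hd₀z]))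
      (by
        simp only [eps_val, R1_val, K2_val, gmap_mul]
        exact gmap_congr (fun t => by by_cases h1 : t = z <;> by_cases h2 : t = j <;> by_cases h3 : t = k <;> simp [cf, df, d3f, qf, pf, h1, h2, h3, hjz, hkz, hjk, hzj, hzk, hkj, hc₀j, hc₀z, hd₀k, hd₀z])
              (fun t => by by_cases h1 : t = z <;> by_cases h2 : t = j <;> by_cases h3 : t = k <;> simp [cf, df, d3f, qf, pf, h1, h2, h3, hjz, hkz, hjk, hzj, hzk, hkj, hc₀j, hc₀z, hd₀k, hd₀z]))
      (by
        simp only [eps_val, R1_val, K2_val, gmap_mul]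
        exact gmap_congr (fun t => by by_cases h1 : t = z <;> by_cases h2 : t = j <;> by_cases h3 : t = k <;> simp [cf, df, d3f, qf, pf, h1, h2, h3, hjz, hkz, hjk, hzj, hzk, hkj, hc₀j, hc₀z, hd₀k, hd₀z])
              (fun t => by by_cases h1 : t = z <;> by_cases h2 : t = j <;> by_cases h3 : t = k <;> simp [cf, df, d3f, qf, pf, h1, h2, h3, hjz, hkz, hjk, hzj, hzk, hkj, hc₀j, hc₀z, hd₀k, hd₀z]))
  have hM2 : ebar (eps z) * ebar (R1 d₀ k hd₀k)
      = ebar (eps z) * ebar (R1 (df u k) k hdk) :=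
    moveR _ _ (K2 (fun _ => 1) (qf k z) (qf_idem k z) (fun _ => rfl)) _
      (by
        simp only [eps_val, R1_val, K2_val, gmap_mul]
        exact gmap_congr (fun t => by by_cases h1 : t = z <;> by_cases h2 : t = j <;> by_cases h3 : t = k <;> simp [cf, df, d3f, qf, pf, h1, h2, h3, hjz, hkz, hjk, hzj, hzk, hkj, hc₀j, hc₀z, hd₀k, hd₀z])
              (fun t => by by_cases h1 : t = z <;> by_cases h2 : t = j <;> by_cases h3 : t = k <;> simp [cf, df, d3f, qf, pf, h1, h2, h3, hjz, hkz, hjk, hzj, hzk, hkj, hc₀j, hc₀z, hd₀k, hd₀z]))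
      (by
        simp only [eps_val, R1_val, K2_val, gmap_mul]
        exact gmap_congr (fun t => by by_cases h1 : t = z <;> by_cases h2 : t = j <;> by_cases h3 : t = k <;> simp [cf, df, d3f, qf, pf, h1, h2, h3, hjz, hkz, hjk, hzj, hzk, hkj, hc₀j, hc₀z, hd₀k, hd₀z])
              (fun t => by by_cases h1 : t = z <;> by_cases h2 : t = j <;> by_cases h3 : t = k <;> simp [cf, df, d3f, qf, pf, h1, h2, h3, hjz, hkz, hjk, hzj, hzk, hkj, hc₀j, hc₀z, hd₀k, hd₀z]))
      (by
        simp only [eps_val, R1_val, K2_val, gmap_mul]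
        exact gmap_congr (fun t => by by_cases h1 : t = z <;> by_cases h2 : t = j <;> by_cases h3 : t = k <;> simp [cf, df, d3f, qf, pf, h1, h2, h3, hjz, hkz, hjk, hzj, hzk, hkj, hc₀j, hc₀z, hd₀k, hd₀z])
              (fun t => by by_cases h1 : t = z <;> by_cases h2 : t = j <;> by_cases h3 : t = k <;> simp [cf, df, d3f, qf, pf, h1, h2, h3, hjz, hkz, hjk, hzj, hzk, hkj, hc₀j, hc₀z, hd₀k, hd₀z]))
  have hM3 : ebar (R1 (cf u z) j hcj) * ebar (eps z)
      = ebar (R1 (cf u z) k hck) * ebar (eps z) :=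
    moveL _ _ (K2 (fun _ => 1) (pf j k) (pf_idem j k) (fun _ => rfl)) _
      (by
        simp only [eps_val, R1_val, K2_val, gmap_mul]
        exact gmap_congr (fun t => by by_cases h1 : t = z <;> by_cases h2 : t = j <;> by_cases h3 : t = k <;> simp [cf, df, d3f, qf, pf, h1, h2, h3, hjz, hkz, hjk, hzj, hzk, hkj, hc₀j, hc₀z, hd₀k, hd₀z])
              (fun t => by by_cases h1 : t = z <;> by_cases h2 : t = j <;> by_cases h3 : t = k <;> simp [cf, df, d3f, qf, pf, h1, h2, h3, hjz, hkz, hjk, hzj, hzk, hkj, hc₀j, hc₀z, hd₀k, hd₀z]))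
      (by
        simp only [eps_val, R1_val, K2_val, gmap_mul]
        exact gmap_congr (fun t => by by_cases h1 : t = z <;> by_cases h2 : t = j <;> by_cases h3 : t = k <;> simp [cf, df, d3f, qf, pf, h1, h2, h3, hjz, hkz, hjk, hzj, hzk, hkj, hc₀j, hc₀z, hd₀k, hd₀z])
              (fun t => by by_cases h1 : t = z <;> by_cases h2 : t = j <;> by_cases h3 : t = k <;> simp [cf, df, d3f, qf, pf, h1, h2, h3, hjz, hkz, hjk, hzj, hzk, hkj, hc₀j, hc₀z, hd₀k, hd₀z]))
      (by
        simp only [eps_val, R1_val, K2_val, gmap_mul]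
        exact gmap_congr (fun t => by by_cases h1 : t = z <;> by_cases h2 : t = j <;> by_cases h3 : t = k <;> simp [cf, df, d3f, qf, pf, h1, h2, h3, hjz, hkz, hjk, hzj, hzk, hkj, hc₀j, hc₀z, hd₀k, hd₀z])
              (fun t => by by_cases h1 : t = z <;> by_cases h2 : t = j <;> by_cases h3 : t = k <;> simp [cf, df, d3f, qf, pf, h1, h2, h3, hjz, hkz, hjk, hzj, hzk, hkj, hc₀j, hc₀z, hd₀k, hd₀z]))
  have hM4 : ebar (eps z) * ebar (R1 (df u k) k hdk)
      = ebar (R1 (fun _ => 1) j hone) * ebar (R1 (df u k) k hdk) :=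
    moveL _ _ (K2 (fun _ => 1) (pf z j) (pf_idem z j) (fun _ => rfl)) _
      (by
        simp only [eps_val, R1_val, K2_val, gmap_mul]
        exact gmap_congr (fun t => by by_cases h1 : t = z <;> by_cases h2 : t = j <;> by_cases h3 : t = k <;> simp [cf, df, d3f, qf, pf, h1, h2, h3, hjz, hkz, hjk, hzj, hzk, hkj, hc₀j, hc₀z, hd₀k, hd₀z])
              (fun t => by by_cases h1 : t = z <;> by_cases h2 : t = j <;> by_cases h3 : t = k <;> simp [cf, df, d3f, qf, pf, h1, h2, h3, hjz, hkz, hjk, hzj, hzk, hkj, hc₀j, hc₀z, hd₀k, hd₀z]))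
      (by
        simp only [eps_val, R1_val, K2_val, gmap_mul]
        exact gmap_congr (fun t => by by_cases h1 : t = z <;> by_cases h2 : t = j <;> by_cases h3 : t = k <;> simp [cf, df, d3f, qf, pf, h1, h2, h3, hjz, hkz, hjk, hzj, hzk, hkj, hc₀j, hc₀z, hd₀k, hd₀z])
              (fun t => by by_cases h1 : t = z <;> by_cases h2 : t = j <;> by_cases h3 : t = k <;> simp [cf, df, d3f, qf, pf, h1, h2, h3, hjz, hkz, hjk, hzj, hzk, hkj, hc₀j, hc₀z, hd₀k, hd₀z]))
      (by
        simp only [eps_val, R1_val, K2_val, gmap_mul]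
        exact gmap_congr (fun t => by by_cases h1 : t = z <;> by_cases h2 : t = j <;> by_cases h3 : t = k <;> simp [cf, df, d3f, qf, pf, h1, h2, h3, hjz, hkz, hjk, hzj, hzk, hkj, hc₀j, hc₀z, hd₀k, hd₀z])
              (fun t => by by_cases h1 : t = z <;> by_cases h2 : t = j <;> by_cases h3 : t = k <;> simp [cf, df, d3f, qf, pf, h1, h2, h3, hjz, hkz, hjk, hzj, hzk, hkj, hc₀j, hc₀z, hd₀k, hd₀z]))
  have hM5 : ebar (R1 (fun _ => 1) j hone) * ebar (R1 (df u k) k hdk)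
      = ebar (R1 (fun _ => 1) j hone) * ebar (R1 (d3f u z k) k hd3k) :=
    moveR _ _ (K2 (cf u z) (qf k j) (qf_idem k j) hm5) _
      (by
        simp only [eps_val, R1_val, K2_val, gmap_mul]
        exact gmap_congr (fun t => by by_cases h1 : t = z <;> by_cases h2 : t = j <;> by_cases h3 : t = k <;> simp [cf, df, d3f, qf, pf, h1, h2, h3, hjz, hkz, hjk, hzj, hzk, hkj, hc₀j, hc₀z, hd₀k, hd₀z])
              (fun t => by by_cases h1 : t = z <;> by_cases h2 : t = j <;> by_cases h3 : t = k <;> simp [cf, df, d3f, qf, pf, h1, h2, h3, hjz, hkz, hjk, hzj, hzk, hkj, hc₀j, hc₀z, hd₀k, hd₀z]))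
      (by
        simp only [eps_val, R1_val, K2_val, gmap_mul]
        exact gmap_congr (fun t => by by_cases h1 : t = z <;> by_cases h2 : t = j <;> by_cases h3 : t = k <;> simp [cf, df, d3f, qf, pf, h1, h2, h3, hjz, hkz, hjk, hzj, hzk, hkj, hc₀j, hc₀z, hd₀k, hd₀z])
              (fun t => by by_cases h1 : t = z <;> by_cases h2 : t = j <;> by_cases h3 : t = k <;> simp [cf, df, d3f, qf, pf, h1, h2, h3, hjz, hkz, hjk, hzj, hzk, hkj, hc₀j, hc₀z, hd₀k, hd₀z]))
      (by
        simp only [eps_val, R1_val, K2_val, gmap_mul]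
        exact gmap_congr (fun t => by by_cases h1 : t = z <;> by_cases h2 : t = j <;> by_cases h3 : t = k <;> simp [cf, df, d3f, qf, pf, h1, h2, h3, hjz, hkz, hjk, hzj, hzk, hkj, hc₀j, hc₀z, hd₀k, hd₀z])
              (fun t => by by_cases h1 : t = z <;> by_cases h2 : t = j <;> by_cases h3 : t = k <;> simp [cf, df, d3f, qf, pf, h1, h2, h3, hjz, hkz, hjk, hzj, hzk, hkj, hc₀j, hc₀z, hd₀k, hd₀z]))
  have hM6 : ebar (R1 (d3f u z k) k hd3k) * ebar (eps z)
      = ebar (R1 (d3f u z k) z hd3z) * ebar (eps z) :=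
    moveL _ _ (K2 (fun _ => 1) (pf k z) (pf_idem k z) (fun _ => rfl)) _
      (by
        simp only [eps_val, R1_val, K2_val, gmap_mul]
        exact gmap_congr (fun t => by by_cases h1 : t = z <;> by_cases h2 : t = j <;> by_cases h3 : t = k <;> simp [cf, df, d3f, qf, pf, h1, h2, h3, hjz, hkz, hjk, hzj, hzk, hkj, hc₀j, hc₀z, hd₀k, hd₀z])
              (fun t => by by_cases h1 : t = z <;> by_cases h2 : t = j <;> by_cases h3 : t = k <;> simp [cf, df, d3f, qf, pf, h1, h2, h3, hjz, hkz, hjk, hzj, hzk, hkj, hc₀j, hc₀z, hd₀k, hd₀z]))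
      (by
        simp only [eps_val, R1_val, K2_val, gmap_mul]
        exact gmap_congr (fun t => by by_cases h1 : t = z <;> by_cases h2 : t = j <;> by_cases h3 : t = k <;> simp [cf, df, d3f, qf, pf, h1, h2, h3, hjz, hkz, hjk, hzj, hzk, hkj, hc₀j, hc₀z, hd₀k, hd₀z])
              (fun t => by by_cases h1 : t = z <;> by_cases h2 : t = j <;> by_cases h3 : t = k <;> simp [cf, df, d3f, qf, pf, h1, h2, h3, hjz, hkz, hjk, hzj, hzk, hkj, hc₀j, hc₀z, hd₀k, hd₀z]))
      (by
        simp only [eps_val, R1_val, K2_val, gmap_mul]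
        exact gmap_congr (fun t => by by_cases h1 : t = z <;> by_cases h2 : t = j <;> by_cases h3 : t = k <;> simp [cf, df, d3f, qf, pf, h1, h2, h3, hjz, hkz, hjk, hzj, hzk, hkj, hc₀j, hc₀z, hd₀k, hd₀z])
              (fun t => by by_cases h1 : t = z <;> by_cases h2 : t = j <;> by_cases h3 : t = k <;> simp [cf, df, d3f, qf, pf, h1, h2, h3, hjz, hkz, hjk, hzj, hzk, hkj, hc₀j, hc₀z, hd₀k, hd₀z]))
  have hM7 : ebar (R1 (d3f u z k) z hd3z) * ebar (eps z) = ebar (R1 (d3f u z k) z hd3z) := by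
    have hp : (R1 (d3f u z k) z hd3z).1 * (eps (G := G) z).1 = (R1 (d3f u z k) z hd3z).1 :=
      (by
        simp only [eps_val, R1_val, K2_val, gmap_mul]
        exact gmap_congr (fun t => by by_cases h1 : t = z <;> by_cases h2 : t = j <;> by_cases h3 : t = k <;> simp [cf, df, d3f, qf, pf, h1, h2, h3, hjz, hkz, hjk, hzj, hzk, hkj, hc₀j, hc₀z, hd₀k, hd₀z])
              (fun t => by by_cases h1 : t = z <;> by_cases h2 : t = j <;> by_cases h3 : t = k <;> simp [cf, df, d3f, qf, pf, h1, h2, h3, hjz, hkz, hjk, hzj, hzk, hkj, hc₀j, hc₀z, hd₀k, hd₀z]))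
    exact ebar_basic _ _ _ (Or.inl hp) hp
  have hM8 : ebar (R1 (fun _ => 1) j hone) * ebar (R1 (d3f u z k) z hd3z)
      = ebar (R1 (fun _ => 1) j hone) * ebar (R1 (df u z) z hd4z) :=
    moveR _ _ (K2 (fun _ => 1) (qf z j) (qf_idem z j) (fun _ => rfl)) _
      (by
        simp only [eps_val, R1_val, K2_val, gmap_mul]
        exact gmap_congr (fun t => by by_cases h1 : t = z <;> by_cases h2 : t = j <;> by_cases h3 : t = k <;> simp [cf, df, d3f, qf, pf, h1, h2, h3, hjz, hkz, hjk, hzj, hzk, hkj, hc₀j, hc₀z, hd₀k, hd₀z])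
              (fun t => by by_cases h1 : t = z <;> by_cases h2 : t = j <;> by_cases h3 : t = k <;> simp [cf, df, d3f, qf, pf, h1, h2, h3, hjz, hkz, hjk, hzj, hzk, hkj, hc₀j, hc₀z, hd₀k, hd₀z]))
      (by
        simp only [eps_val, R1_val, K2_val, gmap_mul]
        exact gmap_congr (fun t => by by_cases h1 : t = z <;> by_cases h2 : t = j <;> by_cases h3 : t = k <;> simp [cf, df, d3f, qf, pf, h1, h2, h3, hjz, hkz, hjk, hzj, hzk, hkj, hc₀j, hc₀z, hd₀k, hd₀z])
              (fun t => by by_cases h1 : t = z <;> by_cases h2 : t = j <;> by_cases h3 : t = k <;> simp [cf, df, d3f, qf, pf, h1, h2, h3, hjz, hkz, hjk, hzj, hzk, hkj, hc₀j, hc₀z, hd₀k, hd₀z]))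
      (by
        simp only [eps_val, R1_val, K2_val, gmap_mul]
        exact gmap_congr (fun t => by by_cases h1 : t = z <;> by_cases h2 : t = j <;> by_cases h3 : t = k <;> simp [cf, df, d3f, qf, pf, h1, h2, h3, hjz, hkz, hjk, hzj, hzk, hkj, hc₀j, hc₀z, hd₀k, hd₀z])
              (fun t => by by_cases h1 : t = z <;> by_cases h2 : t = j <;> by_cases h3 : t = k <;> simp [cf, df, d3f, qf, pf, h1, h2, h3, hjz, hkz, hjk, hzj, hzk, hkj, hc₀j, hc₀z, hd₀k, hd₀z]))
  have hM9 : ebar (R1 (cf u z) k hck) * ebar (R1 (fun _ => 1) j hone)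
      = ebar (R1 (cf u z) k hck) * ebar (R1 (cf u z) j hcj) :=
    moveR _ _ (K2 (cf u z) (qf k j) (qf_idem k j) hm5) _
      (by
        simp only [eps_val, R1_val, K2_val, gmap_mul]
        exact gmap_congr (fun t => by by_cases h1 : t = z <;> by_cases h2 : t = j <;> by_cases h3 : t = k <;> simp [cf, df, d3f, qf, pf, h1, h2, h3, hjz, hkz, hjk, hzj, hzk, hkj, hc₀j, hc₀z, hd₀k, hd₀z])
              (fun t => by by_cases h1 : t = z <;> by_cases h2 : t = j <;> by_cases h3 : t = k <;> simp [cf, df, d3f, qf, pf, h1, h2, h3, hjz, hkz, hjk, hzj, hzk, hkj, hc₀j, hc₀z, hd₀k, hd₀z]))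
      (by
        simp only [eps_val, R1_val, K2_val, gmap_mul]
        exact gmap_congr (fun t => by by_cases h1 : t = z <;> by_cases h2 : t = j <;> by_cases h3 : t = k <;> simp [cf, df, d3f, qf, pf, h1, h2, h3, hjz, hkz, hjk, hzj, hzk, hkj, hc₀j, hc₀z, hd₀k, hd₀z])
              (fun t => by by_cases h1 : t = z <;> by_cases h2 : t = j <;> by_cases h3 : t = k <;> simp [cf, df, d3f, qf, pf, h1, h2, h3, hjz, hkz, hjk, hzj, hzk, hkj, hc₀j, hc₀z, hd₀k, hd₀z]))
      (by
        simp only [eps_val, R1_val, K2_val, gmap_mul]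
        exact gmap_congr (fun t => by by_cases h1 : t = z <;> by_cases h2 : t = j <;> by_cases h3 : t = k <;> simp [cf, df, d3f, qf, pf, h1, h2, h3, hjz, hkz, hjk, hzj, hzk, hkj, hc₀j, hc₀z, hd₀k, hd₀z])
              (fun t => by by_cases h1 : t = z <;> by_cases h2 : t = j <;> by_cases h3 : t = k <;> simp [cf, df, d3f, qf, pf, h1, h2, h3, hjz, hkz, hjk, hzj, hzk, hkj, hc₀j, hc₀z, hd₀k, hd₀z]))
  have hM10 : ebar (R1 (cf u z) j hcj) * ebar (R1 (df u z) z hd4z)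
      = ebar (R1 (df u z) z hd4z) := by
    have hp : (R1 (cf u z) j hcj).1 * (R1 (df u z) z hd4z).1 = (R1 (df u z) z hd4z).1 :=
      (by
        simp only [eps_val, R1_val, K2_val, gmap_mul]
        exact gmap_congr (fun t => by by_cases h1 : t = z <;> by_cases h2 : t = j <;> by_cases h3 : t = k <;> simp [cf, df, d3f, qf, pf, h1, h2, h3, hjz, hkz, hjk, hzj, hzk, hkj, hc₀j, hc₀z, hd₀k, hd₀z])
              (fun t => by by_cases h1 : t = z <;> by_cases h2 : t = j <;> by_cases h3 : t = k <;> simp [cf, df, d3f, qf, pf, h1, h2, h3, hjz, hkz, hjk, hzj, hzk, hkj, hc₀j, hc₀z, hd₀k, hd₀z]))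
    exact ebar_basic _ _ _ (Or.inr (Or.inl hp)) hp
  have hM11 : ebar (R1 (cf u z) k hck) * ebar (R1 (df u z) z hd4z)
      = ebar (R1 (df u z) z hd4z) := by
    have hp : (R1 (cf u z) k hck).1 * (R1 (df u z) z hd4z).1 = (R1 (df u z) z hd4z).1 :=
      (by
        simp only [eps_val, R1_val, K2_val, gmap_mul]
        exact gmap_congr (fun t => by by_cases h1 : t = z <;> by_cases h2 : t = j <;> by_cases h3 : t = k <;> simp [cf, df, d3f, qf, pf, h1, h2, h3, hjz, hkz, hjk, hzj, hzk, hkj, hc₀j, hc₀z, hd₀k, hd₀z])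
              (fun t => by by_cases h1 : t = z <;> by_cases h2 : t = j <;> by_cases h3 : t = k <;> simp [cf, df, d3f, qf, pf, h1, h2, h3, hjz, hkz, hjk, hzj, hzk, hkj, hc₀j, hc₀z, hd₀k, hd₀z]))
    exact ebar_basic _ _ _ (Or.inr (Or.inl hp)) hp
  have hM12 : ebar (eps z) * ebar (R1 (df u z) z hd4z) = ebar (eps z) := by
    have hp : (eps (G := G) z).1 * (R1 (df u z) z hd4z).1 = (eps z).1 :=
      (by
        simp only [eps_val, R1_val, K2_val, gmap_mul]
        exact gmap_congr (fun t => by by_cases h1 : t = z <;> by_cases h2 : t = j <;> by_cases h3 : t = k <;> simp [cf, df, d3f, qf, pf, h1, h2, h3, hjz, hkz, hjk, hzj, hzk, hkj, hc₀j, hc₀z, hd₀k, hd₀z])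
              (fun t => by by_cases h1 : t = z <;> by_cases h2 : t = j <;> by_cases h3 : t = k <;> simp [cf, df, d3f, qf, pf, h1, h2, h3, hjz, hkz, hjk, hzj, hzk, hkj, hc₀j, hc₀z, hd₀k, hd₀z]))
    exact ebar_basic _ _ _ (Or.inl hp) hp
  calc (ebar (eps z) * ebar (R1 c₀ j hc₀j) * ebar (eps z)) *
      (ebar (eps z) * ebar (R1 d₀ k hd₀k) * ebar (eps z))
      = (ebar (eps z) * ebar (R1 c₀ j hc₀j)) *
        ((ebar (eps z) * ebar (eps z)) * (ebar (R1 d₀ k hd₀k) * ebar (eps z))) := by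
        simp only [mul_assoc]
    _ = (ebar (eps z) * ebar (R1 c₀ j hc₀j)) *
        (ebar (eps z) * (ebar (R1 d₀ k hd₀k) * ebar (eps z))) := by rw [epsE]
    _ = (ebar (eps z) * ebar (R1 (cf u z) j hcj)) *
        (ebar (eps z) * (ebar (R1 d₀ k hd₀k) * ebar (eps z))) := by rw [hM1]
    _ = (ebar (eps z) * ebar (R1 (cf u z) j hcj)) *
        ((ebar (eps z) * ebar (R1 d₀ k hd₀k)) * ebar (eps z)) := by simp only [mul_assoc]
    _ = (ebar (eps z) * ebar (R1 (cf u z) j hcj)) *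
        ((ebar (eps z) * ebar (R1 (df u k) k hdk)) * ebar (eps z)) := by rw [hM2]
    _ = ebar (eps z) * ((ebar (R1 (cf u z) j hcj) * ebar (eps z)) *
        (ebar (R1 (df u k) k hdk) * ebar (eps z))) := by simp only [mul_assoc]
    _ = ebar (eps z) * ((ebar (R1 (cf u z) k hck) * ebar (eps z)) *
        (ebar (R1 (df u k) k hdk) * ebar (eps z))) := by rw [hM3]
    _ = ebar (eps z) * (ebar (R1 (cf u z) k hck) *
        ((ebar (eps z) * ebar (R1 (df u k) k hdk)) * ebar (eps z))) := by simp only [mul_assoc]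
    _ = ebar (eps z) * (ebar (R1 (cf u z) k hck) *
        ((ebar (R1 (fun _ => 1) j hone) * ebar (R1 (df u k) k hdk)) * ebar (eps z))) := by
        rw [hM4]
    _ = ebar (eps z) * (ebar (R1 (cf u z) k hck) *
        ((ebar (R1 (fun _ => 1) j hone) * ebar (R1 (d3f u z k) k hd3k)) * ebar (eps z))) := by
        rw [hM5]
    _ = ebar (eps z) * (ebar (R1 (cf u z) k hck) * (ebar (R1 (fun _ => 1) j hone) *
        (ebar (R1 (d3f u z k) k hd3k) * ebar (eps z)))) := by simp only [mul_assoc]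
    _ = ebar (eps z) * (ebar (R1 (cf u z) k hck) * (ebar (R1 (fun _ => 1) j hone) *
        (ebar (R1 (d3f u z k) z hd3z) * ebar (eps z)))) := by rw [hM6]
    _ = ebar (eps z) * (ebar (R1 (cf u z) k hck) * (ebar (R1 (fun _ => 1) j hone) *
        ebar (R1 (d3f u z k) z hd3z))) := by rw [hM7]
    _ = ebar (eps z) * (ebar (R1 (cf u z) k hck) * (ebar (R1 (fun _ => 1) j hone) *
        ebar (R1 (df u z) z hd4z))) := by rw [hM8]
    _ = ebar (eps z) * ((ebar (R1 (cf u z) k hck) * ebar (R1 (fun _ => 1) j hone)) *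
        ebar (R1 (df u z) z hd4z)) := by simp only [mul_assoc]
    _ = ebar (eps z) * ((ebar (R1 (cf u z) k hck) * ebar (R1 (cf u z) j hcj)) *
        ebar (R1 (df u z) z hd4z)) := by rw [hM9]
    _ = ebar (eps z) * (ebar (R1 (cf u z) k hck) * (ebar (R1 (cf u z) j hcj) *
        ebar (R1 (df u z) z hd4z))) := by simp only [mul_assoc]
    _ = ebar (eps z) * (ebar (R1 (cf u z) k hck) * ebar (R1 (df u z) z hd4z)) := by rw [hM10]
    _ = ebar (eps z) * ebar (R1 (df u z) z hd4z) := by rw [hM11]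
    _ = ebar (eps z) := hM12


theorem d5f_k (v : G) (k l : Fin n) : d5f v k l k = 1 := by simp [d5f]
theorem d5f_l (v : G) (k l : Fin n) : d5f v k l l = 1 := by
  unfold d5f; split_ifs <;> simp_all

def pbf (k l z t : Fin n) : Fin n := if t = k then k else if t = l then k else z

theorem pbf_idem (k l z : Fin n) (hkz : k ≠ z) (hlz : l ≠ z) (t : Fin n) :
    pbf k l z (pbf k l z t) = pbf k l z t := by
  unfold pbf; split_ifs <;> simp_all

theorem lemB (v : G) (z k l : Fin n) (hkz : k ≠ z) (hlz : l ≠ z) (hlk : l ≠ k)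
    (d₀ : Fin n → G) (hd₀k : d₀ k = 1) (hd₀z : d₀ z = v) :
    ebar (eps z) * ebar (R1 d₀ k hd₀k) * ebar (eps z) =
      ebar (eps z) * ebar (R1 (d5f v k l) l (d5f_l v k l)) * ebar (eps z) := by
  have hzk := Ne.symm hkz
  have hzl := Ne.symm hlz
  have hkl := Ne.symm hlk
  have hB1 : ebar (eps z) * ebar (R1 d₀ k hd₀k)
      = ebar (eps z) * ebar (R1 (d5f v k l) k (d5f_k v k l)) :=
    moveR _ _ (K2 (fun _ => 1) (pbf k l z) (pbf_idem k l z hkz hlz) (fun _ => rfl)) _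
      (by
        simp only [eps_val, R1_val, K2_val, gmap_mul]
        exact gmap_congr (fun t => by simp)
          (fun t => by simp [pbf, hzk, hzl]))
      (by
        simp only [eps_val, R1_val, K2_val, gmap_mul]
        exact gmap_congr (fun t => by simp)
          (fun t => by simp [pbf]))
      (by
        simp only [eps_val, R1_val, K2_val, gmap_mul]
        exact gmap_congr (fun t => by by_cases h1 : t = z <;> by_cases h2 : t = k <;> by_cases h3 : t = l <;> simp [d5f, qf, pf, h1, h2, h3, hkz, hlz, hlk, hzk, hzl, hkl, hd₀k, hd₀z] <;> simp [pbf, h1, h2, h3, hzk, hzl, hd₀k, hd₀z])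
          (fun t => rfl))
  have hB2 : ebar (R1 (d5f v k l) k (d5f_k v k l)) * ebar (eps z)
      = ebar (R1 (d5f v k l) l (d5f_l v k l)) * ebar (eps z) :=
    moveL _ _ (K2 (fun _ => 1) (pf k l) (pf_idem k l) (fun _ => rfl)) _
      (by
        simp only [eps_val, R1_val, K2_val, gmap_mul]
        exact gmap_congr (fun t => by by_cases h1 : t = z <;> by_cases h2 : t = k <;> by_cases h3 : t = l <;> simp [d5f, qf, pf, h1, h2, h3, hkz, hlz, hlk, hzk, hzl, hkl, hd₀k, hd₀z])
          (fun t => by by_cases h1 : t = z <;> by_cases h2 : t = k <;> by_cases h3 : t = l <;> simp [d5f, qf, pf, h1, h2, h3, hkz, hlz, hlk, hzk, hzl, hkl, hd₀k, hd₀z]))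
      (by
        simp only [eps_val, R1_val, K2_val, gmap_mul]
        exact gmap_congr (fun t => by by_cases h1 : t = z <;> by_cases h2 : t = k <;> by_cases h3 : t = l <;> simp [d5f, qf, pf, h1, h2, h3, hkz, hlz, hlk, hzk, hzl, hkl, hd₀k, hd₀z])
          (fun t => by by_cases h1 : t = z <;> by_cases h2 : t = k <;> by_cases h3 : t = l <;> simp [d5f, qf, pf, h1, h2, h3, hkz, hlz, hlk, hzk, hzl, hkl, hd₀k, hd₀z]))
      (by
        simp only [eps_val, R1_val, K2_val, gmap_mul]
        exact gmap_congr (fun t => by by_cases h1 : t = z <;> by_cases h2 : t = k <;> by_cases h3 : t = l <;> simp [d5f, qf, pf, h1, h2, h3, hkz, hlz, hlk, hzk, hzl, hkl, hd₀k, hd₀z])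
          (fun t => by by_cases h1 : t = z <;> by_cases h2 : t = k <;> by_cases h3 : t = l <;> simp [d5f, qf, pf, h1, h2, h3, hkz, hlz, hlk, hzk, hzl, hkl, hd₀k, hd₀z]))
  calc ebar (eps z) * ebar (R1 d₀ k hd₀k) * ebar (eps z)
      = (ebar (eps z) * ebar (R1 (d5f v k l) k (d5f_k v k l))) * ebar (eps z) := by rw [hB1]
    _ = ebar (eps z) * (ebar (R1 (d5f v k l) k (d5f_k v k l)) * ebar (eps z)) :=
        mul_assoc _ _ _
    _ = ebar (eps z) * (ebar (R1 (d5f v k l) l (d5f_l v k l)) * ebar (eps z)) := by rw [hB2]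
    _ = ebar (eps z) * ebar (R1 (d5f v k l) l (d5f_l v k l)) * ebar (eps z) :=
        (mul_assoc _ _ _).symm


theorem exists_third (hn : 3 ≤ n) (z k : Fin n) : ∃ l : Fin n, l ≠ z ∧ l ≠ k := by
  by_contra h
  push_neg at h
  have hsub : (Finset.univ : Finset (Fin n)) ⊆ {z, k} := by
    intro x _
    simp only [Finset.mem_insert, Finset.mem_singleton]
    by_cases hx : x = z
    · exact Or.inl hx
    · exact Or.inr (h x hx)
  have h1 := Finset.card_le_card hsub
  have h2 : ({z, k} : Finset (Fin n)).card ≤ 2 := by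
    refine le_trans (Finset.card_insert_le _ _) ?_
    simp
  simp only [Finset.card_univ, Fintype.card_fin] at h1
  omega

theorem full (hn : 3 ≤ n) (u : G) (z j k : Fin n)
    (c₀ d₀ : Fin n → G) (hc₀j : c₀ j = 1) (hd₀k : d₀ k = 1)
    (hc₀z : c₀ z = u) (hd₀z : d₀ z = u⁻¹) :
    (ebar (eps z) * ebar (R1 c₀ j hc₀j) * ebar (eps z)) *
      (ebar (eps z) * ebar (R1 d₀ k hd₀k) * ebar (eps z)) = ebar (eps z) := by
  by_cases hjz : j = z
  · -- then u = 1
    have hu : u = 1 := by rw [← hc₀z, ← hjz, hc₀j]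
    have hA : ebar (eps z) * ebar (R1 c₀ j hc₀j) * ebar (eps z) = ebar (eps z) :=
      lemA z j c₀ (by rw [← hjz, hc₀j]) hc₀j
    have hd₀z' : d₀ z = 1 := by rw [hd₀z, hu, inv_one]
    rw [hA]
    calc ebar (eps z) * (ebar (eps z) * ebar (R1 d₀ k hd₀k) * ebar (eps z))
        = (ebar (eps z) * ebar (eps z)) * (ebar (R1 d₀ k hd₀k) * ebar (eps z)) := by
          simp only [mul_assoc]
      _ = ebar (eps z) * (ebar (R1 d₀ k hd₀k) * ebar (eps z)) := by rw [epsE]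
      _ = ebar (eps z) * ebar (R1 d₀ k hd₀k) * ebar (eps z) := (mul_assoc _ _ _).symm
      _ = ebar (eps z) := lemA z k d₀ hd₀z' hd₀k
  · by_cases hkz : k = z
    · have hu : u⁻¹ = 1 := by rw [← hd₀z, ← hkz, hd₀k]
      have hu1 : u = 1 := by rwa [inv_eq_one] at hu
      have hB : ebar (eps z) * ebar (R1 d₀ k hd₀k) * ebar (eps z) = ebar (eps z) :=
        lemA z k d₀ (by rw [← hkz, hd₀k]) hd₀k
      have hc₀z' : c₀ z = 1 := by rw [hc₀z, hu1]
      rw [hB]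
      calc (ebar (eps z) * ebar (R1 c₀ j hc₀j) * ebar (eps z)) * ebar (eps z)
          = (ebar (eps z) * ebar (R1 c₀ j hc₀j)) * (ebar (eps z) * ebar (eps z)) := by
            simp only [mul_assoc]
        _ = (ebar (eps z) * ebar (R1 c₀ j hc₀j)) * ebar (eps z) := by rw [epsE]
        _ = ebar (eps z) := lemA z j c₀ hc₀z' hc₀j
    · by_cases hjk : j = k
      · obtain ⟨l, hlz, hlk⟩ := exists_third hn z k
        rw [lemB u⁻¹ z k l hkz hlz hlk d₀ hd₀k hd₀z]
        exact master u z j l hjz hlz (fun hjl => hlk (hjl ▸ hjk)) c₀ (d5f u⁻¹ k l)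
          hc₀j (d5f_l u⁻¹ k l) hc₀z
          (by simp [d5f, Ne.symm hkz, Ne.symm hlz])
      · exact master u z j k hjz hkz hjk c₀ d₀ hc₀j hd₀k hc₀z hd₀z


theorem igE_eq (a : Fin n → G) (j : Fin n) :
    igE a j = ebar (R1 (fun t => a t * (a j)⁻¹) j (by simp)) := by
  unfold igE
  congr 1
  apply Subtype.ext
  apply ActEnd.ext'
  funext x
  simp [ActEnd.eaj, gmap, mul_assoc]

theorem ig11_eq (h0 : 0 < n) : ig11 (G := G) h0 = ebar (eps (⟨0, h0⟩ : Fin n)) := by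
  unfold ig11 igE
  congr 1
  apply Subtype.ext
  apply ActEnd.ext'
  funext x
  simp [ActEnd.eaj, gmap, eps, R1]

end IGWork

/-- Writing `w_u = ē_{11} ē_{a,j} ē_{11}` for any choice with `a j = u⁻¹`,
we have `w_u w_{u⁻¹} = w_{u⁻¹} w_u = ē_{11}` in `IG(E)`: `w_u⁻¹ = w_{u⁻¹}` in
the maximal subgroup at `ē_{11}`. -/
theorem stmt18 {G : Type*} [Group G] {n : ℕ} (hn : 3 ≤ n) (u : G)
    (a b : Fin n → G) (ha : a ⟨0, by omega⟩ = 1) (hb : b ⟨0, by omega⟩ = 1)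
    (j k : Fin n) (hu : a j = u⁻¹) (hbu : b k = u) :
    (ig11 (G := G) (n := n) (by omega) * igE a j * ig11 (G := G) (n := n) (by omega)) *
        (ig11 (G := G) (n := n) (by omega) * igE b k * ig11 (G := G) (n := n) (by omega)) = ig11 (G := G) (n := n) (by omega) ∧
    (ig11 (G := G) (n := n) (by omega) * igE b k * ig11 (G := G) (n := n) (by omega)) *
        (ig11 (G := G) (n := n) (by omega) * igE a j * ig11 (G := G) (n := n) (by omega)) = ig11 (G := G) (n := n) (by omega) := by
  have h0 : 0 < n := by omega
  have ha' : a ⟨0, h0⟩ = 1 := ha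
  have hb' : b ⟨0, h0⟩ = 1 := hb
  constructor
  · simp only [IGWork.ig11_eq, IGWork.igE_eq]
    exact IGWork.full hn u ⟨0, h0⟩ j k (fun t => a t * (a j)⁻¹) (fun t => b t * (b k)⁻¹)
      (by simp) (by simp) (by simp [ha', hu]) (by simp [hb', hbu])
  · simp only [IGWork.ig11_eq, IGWork.igE_eq]
    exact IGWork.full hn u⁻¹ ⟨0, h0⟩ k j (fun t => b t * (b k)⁻¹) (fun t => a t * (a j)⁻¹)
      (by simp) (by simp) (by simp [hb', hbu]) (by simp [ha', hu])
end

section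
/- Let G be any group, n ≥ 3, E the set of idempotents of End F_n(G), and IG(E) the free idempotent generated monoid over E. Let e ∈ End F_n(G) be any idempotent of rank 1 and let H̄ = {w ∈ IG(E) : w H ē} be the H-class of ē in IG(E) (the maximal subgroup of IG(E) containing ē). Then H̄ is closed under the multiplication of IG(E), and there is a bijection φ : H̄ → G such that φ(w w') = φ(w)·φ(w') for all w, w' ∈ H̄ and φ(ē) = 1; in particular, H̄ with the induced multiplication is a group isomorphic to G. Thus every group arises as a maximal subgroup of the free idempotent generated semigroup over the biordered set of idempotents of the endomorphism monoid of a finite-rank free group act. -/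
namespace S19

variable {G : Type*} [Group G] {n : ℕ}

/-- endomorphism given by a vector and an index map -/
def mk (b : Fin n → G) (τ : Fin n → Fin n) : ActEnd G n :=
  ⟨fun x => (x.1 * b x.2, τ x.2), by intro h x; dsimp only; rw [mul_assoc]⟩

@[simp] lemma mk_toFun (b : Fin n → G) (τ : Fin n → Fin n) (x : G × Fin n) :
    (mk b τ).toFun x = (x.1 * b x.2, τ x.2) := rfl

lemma mk_mul (b c : Fin n → G) (τ υ : Fin n → Fin n) :
    (mk b τ : ActEnd G n) * mk c υ = mk (fun i => b i * c (τ i)) (fun i => υ (τ i)) := by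
  apply ActEnd.ext'
  funext x
  simp [mul_assoc]

lemma mk_congr {b c : Fin n → G} {τ υ : Fin n → Fin n} (hb : ∀ i, b i = c i)
    (hτ : ∀ i, τ i = υ i) : mk b τ = mk c υ := by
  have h1 : b = c := funext hb
  have h2 : τ = υ := funext hτ
  rw [h1, h2]

lemma mk_inj {b c : Fin n → G} {τ υ : Fin n → Fin n}
    (h : (mk b τ : ActEnd G n) = mk c υ) : (∀ i, b i = c i) ∧ (∀ i, τ i = υ i) := by
  constructor <;> intro i <;>
  · have := congrArg (fun u => u.toFun (1, i)) h
    simp only [mk_toFun, one_mul, Prod.mk.injEq] at this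
    tauto

lemma mk_idem (b : Fin n → G) (τ : Fin n → Fin n) (h1 : ∀ i, τ (τ i) = τ i)
    (h2 : ∀ i, b (τ i) = 1) : (mk b τ : ActEnd G n) * mk b τ = mk b τ := by
  rw [mk_mul]
  exact mk_congr (fun i => by rw [h2, mul_one]) h1

/-- decomposition of an arbitrary endomorphism -/
def bf (u : ActEnd G n) : Fin n → G := fun i => (u.toFun (1, i)).1
def tf (u : ActEnd G n) : Fin n → Fin n := fun i => (u.toFun (1, i)).2

lemma eq_mk (u : ActEnd G n) : u = mk (bf u) (tf u) := by
  apply ActEnd.ext'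
  funext x
  have := u.equivariant x.1 (1, x.2)
  rw [mul_one] at this
  simp only [mk_toFun, bf, tf]
  rw [show ((x.1 : G), x.2) = x from rfl] at this
  rw [this]

lemma idem_tf {w : ActEnd G n} (hw : w * w = w) : ∀ i, tf w (tf w i) = tf w i := by
  have h := hw
  rw [eq_mk w, mk_mul] at h
  exact fun i => (mk_inj h).2 i

lemma idem_bf {w : ActEnd G n} (hw : w * w = w) : ∀ i, bf w (tf w i) = 1 := by
  have h := hw
  rw [eq_mk w, mk_mul] at h
  intro i
  have := (mk_inj h).1 i
  exact mul_left_cancel (by rw [this, mul_one])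


abbrev EI (G : Type*) [Group G] (n : ℕ) := {e : ActEnd G n // e * e = e}

lemma rel_mul (x y z : EI G n)
    (hc : x.1 * y.1 = x.1 ∨ x.1 * y.1 = y.1 ∨ y.1 * x.1 = x.1 ∨ y.1 * x.1 = y.1)
    (hp : x.1 * y.1 = z.1) : ebar x * ebar y = ebar z := by
  unfold ebar
  rw [← map_mul, Con.coe_mk']
  exact (Con.eq _).2 (ConGen.Rel.of _ _ ⟨x, y, z, hc, hp, rfl, rfl⟩)

/-- the canonical projection IG(E) → M -/
def pr : IG (ActEnd G n) →* ActEnd G n :=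
  Con.lift _ (FreeMonoid.lift Subtype.val) (by
    apply Con.conGen_le.2
    rintro x y ⟨e, f, g, _, hp, rfl, rfl⟩
    show FreeMonoid.lift _ _ = FreeMonoid.lift _ _
    rw [map_mul]
    simp only [FreeMonoid.lift_eval_of]
    exact hp)

@[simp] lemma pr_ebar (x : EI G n) : pr (ebar x) = x.1 := by
  unfold ebar pr
  rw [Con.lift_mk']
  rfl

section Fixed

variable (a : Fin n → G) (k l₀ j : Fin n)

/-- rank-one idempotent with target m -/
def rOneE (c : Fin n → G) (m : Fin n) (hc : c m = 1) : EI G n :=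
  ⟨mk c (fun _ => m), mk_idem _ _ (fun _ => rfl) (fun _ => hc)⟩

@[simp] lemma rOneE_val (c : Fin n → G) (m : Fin n) (hc : c m = 1) :
    (rOneE c m hc).1 = mk c (fun _ => m) := rfl

def sVec (g : G) (m : Fin n) : Fin n → G := fun i => if i = m then 1 else g

lemma sVec_self (g : G) (m : Fin n) : sVec g m m = 1 := if_pos rfl

lemma sVec_ne (g : G) {m i : Fin n} (h : i ≠ m) : sVec g m i = g := if_neg h

def SE (g : G) (m : Fin n) : EI G n := rOneE (sVec g m) m (sVec_self g m)

variable (hak : a k = 1)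

def eE : EI G n := rOneE a k hak

/-- product of two rank-one elements -/
lemma rone_mul (c d : Fin n → G) (m m' : Fin n) (hc : c m = 1) (hd : d m' = 1) :
    (rOneE c m hc).1 * (rOneE d m' hd).1 = mk (fun i => c i * d m) (fun _ => m') := by
  rw [rOneE_val, rOneE_val, mk_mul]

/-- same-target absorption -/
lemma absorb (c d : Fin n → G) (m : Fin n) (hc : c m = 1) (hd : d m = 1) :
    ebar (rOneE c m hc) * ebar (rOneE d m hd) = ebar (rOneE c m hc) := by
  have key : (rOneE c m hc).1 * (rOneE d m hd).1 = (rOneE c m hc).1 := by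
    rw [rone_mul, rOneE_val]
    exact mk_congr (fun i => by rw [hd, mul_one]) (fun i => rfl)
  exact rel_mul _ _ _ (Or.inl key) key

/-- Lemma A': the entries of the second letter away from the two targets are free -/
lemma free_entries (c d d' : Fin n → G) (m m' : Fin n) (hc : c m = 1) (hd : d m' = 1)
    (hd' : d' m' = 1) (hmm : m ≠ m') (he : d' m = d m) :
    ebar (rOneE c m hc) * ebar (rOneE d m' hd) = ebar (rOneE c m hc) * ebar (rOneE d' m' hd') := by
  set bu : Fin n → G := fun i => if i = m ∨ i = m' then 1 else d' i * (d m)⁻¹ with hbu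
  set τu : Fin n → Fin n := fun i => if i = m' then m' else m with hτu
  have hbu_m : bu m = 1 := if_pos (Or.inl rfl)
  have hbu_m' : bu m' = 1 := if_pos (Or.inr rfl)
  have hτu_m : τu m = m := if_neg hmm
  have hτu_m' : τu m' = m' := if_pos rfl
  have huidem : (mk bu τu : ActEnd G n) * mk bu τu = mk bu τu := by
    apply mk_idem
    · intro i
      by_cases h : i = m' <;> simp only [hτu, h, if_pos, if_true, if_neg, if_false] <;>
        simp [hmm, h]
    · intro i
      by_cases h : i = m' <;> simp only [hτu, h, if_true, if_neg, if_false] <;>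
        simp [hbu_m, hbu_m', h]
  set u : EI G n := ⟨mk bu τu, huidem⟩ with hu
  have h1 : ebar (rOneE c m hc) * ebar u = ebar (rOneE c m hc) := by
    have key : (rOneE c m hc).1 * u.1 = (rOneE c m hc).1 := by
      rw [rOneE_val, hu, mk_mul]
      exact mk_congr (fun i => by rw [hbu_m, mul_one]) (fun i => hτu_m)
    exact rel_mul _ _ _ (Or.inl key) key
  have h2 : ebar u * ebar (rOneE d m' hd) = ebar (rOneE d' m' hd') := by
    have hcond : (rOneE d m' hd).1 * u.1 = (rOneE d m' hd).1 := by
      rw [rOneE_val, hu, mk_mul]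
      exact mk_congr (fun i => by rw [hbu_m', mul_one]) (fun i => hτu_m')
    have hprod : u.1 * (rOneE d m' hd).1 = (rOneE d' m' hd').1 := by
      rw [rOneE_val, rOneE_val, hu, mk_mul]
      apply mk_congr _ (fun i => rfl)
      intro i
      by_cases h' : i = m'
      · subst h'
        rw [hbu_m', hτu_m', one_mul, hd, hd']
      · by_cases h : i = m
        · subst h
          rw [hbu_m, hτu_m, one_mul, he]
        · have : bu i = d' i * (d m)⁻¹ := if_neg (by tauto)
          have ht : τu i = m := if_neg h'
          rw [this, ht, inv_mul_cancel_right]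
    exact rel_mul _ _ _ (Or.inr (Or.inr (Or.inr hcond))) hprod
  conv_lhs => rw [← h1]
  rw [mul_assoc, h2]

/-- Lemma C: absorbing an arbitrary idempotent letter after a rank-one letter -/
lemma letter_step (c : Fin n → G) (m : Fin n) (hc : c m = 1) (w : EI G n) :
    ebar (rOneE c m hc) * ebar w
      = ebar (rOneE c m hc) * ebar (SE (bf w.1 m) (tf w.1 m)) := by
  set b' : Fin n → G := bf w.1 with hb'
  set τ : Fin n → Fin n := tf w.1 with hτ'
  have hw : w.1 = mk b' τ := eq_mk w.1
  have hτ : ∀ i, τ (τ i) = τ i := idem_tf w.2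
  have hb : ∀ i, b' (τ i) = 1 := idem_bf w.2
  by_cases hτm : τ m = m
  · -- stay case
    have hbm : b' m = 1 := by have := hb m; rwa [hτm] at this
    have hrhs : ebar (rOneE c m hc) * ebar (SE (b' m) (τ m)) = ebar (rOneE c m hc) := by
      rw [hbm, hτm]
      exact absorb c (sVec 1 m) m hc (sVec_self 1 m)
    rw [hrhs]
    set ct : Fin n → G := fun i => if τ i = i then 1 else b' i with hct'
    have hctm : ct m = 1 := if_pos hτm
    have hctfix : ∀ i, τ i = i → ct i = 1 := fun i h => if_pos h
    set t : EI G n := rOneE ct m hctm with ht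
    have h1 : ebar (rOneE c m hc) * ebar t = ebar (rOneE c m hc) := absorb c ct m hc hctm
    have hcond : w.1 * t.1 = t.1 := by
      rw [hw, rOneE_val, mk_mul]
      apply mk_congr _ (fun i => rfl)
      intro i
      by_cases hfix : τ i = i
      · have h1' : b' i = 1 := by have := hb i; rwa [hfix] at this
        have h2' : ct (τ i) = ct i := by rw [hfix]
        rw [h2', h1', one_mul]
      · have h2' : ct (τ i) = 1 := hctfix (τ i) (hτ i)
        have h3' : ct i = b' i := if_neg hfix
        rw [h2', h3', mul_one]
    have hprod : t.1 * w.1 = t.1 := by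
      rw [hw, rOneE_val, mk_mul]
      exact mk_congr (fun i => by rw [hbm, mul_one]) (fun i => hτm)
    have h2 : ebar t * ebar w = ebar t := rel_mul _ _ _ (Or.inr (Or.inr (Or.inl hcond))) hprod
    conv_lhs => rw [← h1]
    rw [mul_assoc, h2, h1]
  · -- moving case
    set ct : Fin n → G := fun i =>
      if τ i = i then (if i = τ m then (b' m)⁻¹ else 1)
      else b' i * (if τ i = τ m then (b' m)⁻¹ else 1) with hct'
    have hctm : ct m = 1 := by
      have : ct m = b' m * (if τ m = τ m then (b' m)⁻¹ else 1) := if_neg hτm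
      rw [this, if_pos rfl, mul_inv_cancel]
    have hctfix : ∀ i, τ i = i → ct i = (if i = τ m then (b' m)⁻¹ else 1) :=
      fun i h => if_pos h
    set t : EI G n := rOneE ct m hctm with ht
    set cr : Fin n → G := fun i => ct i * b' m with hcr'
    have hcrt : cr (τ m) = 1 := by
      have h1' : ct (τ m) = (b' m)⁻¹ := by
        rw [hctfix (τ m) (hτ m), if_pos rfl]
      show ct (τ m) * b' m = 1
      rw [h1', inv_mul_cancel]
    set r : EI G n := rOneE cr (τ m) hcrt with hr
    have h1 : ebar (rOneE c m hc) * ebar t = ebar (rOneE c m hc) := absorb c ct m hc hctm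
    have hcond : w.1 * t.1 = t.1 := by
      rw [hw, rOneE_val, mk_mul]
      apply mk_congr _ (fun i => rfl)
      intro i
      by_cases hfix : τ i = i
      · have h1' : b' i = 1 := by have := hb i; rwa [hfix] at this
        have h2' : ct (τ i) = ct i := by rw [hfix]
        rw [h2', h1', one_mul]
      · have h2' : ct (τ i) = (if τ i = τ m then (b' m)⁻¹ else 1) := by
          rw [hctfix (τ i) (hτ i)]
        have h3' : ct i = b' i * (if τ i = τ m then (b' m)⁻¹ else 1) := if_neg hfix
        rw [h2', h3']
    have hprod : t.1 * w.1 = r.1 := by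
      rw [hw, rOneE_val, hr, rOneE_val, mk_mul]
    have h2 : ebar t * ebar w = ebar r := rel_mul _ _ _ (Or.inr (Or.inr (Or.inl hcond))) hprod
    have h3 : ebar (rOneE c m hc) * ebar w = ebar (rOneE c m hc) * ebar r := by
      conv_lhs => rw [← h1]
      rw [mul_assoc, h2]
    rw [h3, hr]
    apply free_entries c cr (sVec (b' m) (τ m)) m (τ m) hc hcrt (sVec_self _ _)
      (Ne.symm hτm)
    show sVec (b' m) (τ m) m = ct m * b' m
    rw [sVec_ne _ (Ne.symm hτm), hctm, one_mul]

/-- Lemma D: generic three-letter merge, all targets distinct -/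
lemma merge_gen (c d : Fin n → G) (m m' : Fin n) (hc : c m = 1) (hd : d m' = 1)
    (hmk : m ≠ k) (hm'k : m' ≠ k) (hmm' : m ≠ m') :
    ebar (rOneE a k hak) * ebar (rOneE c m hc) * ebar (rOneE d m' hd)
      = ebar (rOneE a k hak) * ebar (SE (c k * d m) m') := by
  set g : G := d m with hg
  set c' : Fin n → G := fun i => if i = m then 1 else if i = m' then g⁻¹ else c k with hcdef
  set d' : Fin n → G := fun i => if i = m' then 1 else if i = m then g else 1 with hddef
  have hc' : c' m = 1 := if_pos rfl
  have hd' : d' m' = 1 := if_pos rfl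
  have hc'k : c' k = c k := by
    show (if k = m then _ else if k = m' then _ else c k) = c k
    rw [if_neg hmk.symm, if_neg hm'k.symm]
  have hc'm' : c' m' = g⁻¹ := by
    show (if m' = m then _ else if m' = m' then g⁻¹ else _) = g⁻¹
    rw [if_neg hmm'.symm, if_pos rfl]
  have hd'm : d' m = g := by
    show (if m = m' then _ else if m = m then g else _) = g
    rw [if_neg hmm', if_pos rfl]
  have hd'far : ∀ i, i ≠ m → i ≠ m' → d' i = 1 := by
    intro i h1 h2; show (if i = m' then _ else if i = m then _ else (1:G)) = 1
    rw [if_neg h2, if_neg h1]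
  have hc'far : ∀ i, i ≠ m → i ≠ m' → c' i = c k := by
    intro i h1 h2; show (if i = m then _ else if i = m' then _ else c k) = c k
    rw [if_neg h1, if_neg h2]
  have step1 : ebar (rOneE a k hak) * ebar (rOneE c m hc)
      = ebar (rOneE a k hak) * ebar (rOneE c' m hc') :=
    free_entries a c c' k m hak hc hc' hmk.symm hc'k
  have step2 : ebar (rOneE c' m hc') * ebar (rOneE d m' hd)
      = ebar (rOneE c' m hc') * ebar (rOneE d' m' hd') :=
    free_entries c' d d' m m' hc' hd hd' hmm' hd'm
  -- the singularizer u
  set bu : Fin n → G := fun i => if i = m then g else 1 with hbudef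
  set τu : Fin n → Fin n := fun i => if i = m ∨ i = m' then m' else k with hτudef
  have hbum : bu m = g := if_pos rfl
  have hbu1 : ∀ i, i ≠ m → bu i = 1 := fun i h => if_neg h
  have hτum : τu m = m' := if_pos (Or.inl rfl)
  have hτum' : τu m' = m' := if_pos (Or.inr rfl)
  have hτuk : τu k = k := if_neg (by push_neg; exact ⟨hmk.symm, hm'k.symm⟩)
  have hτufar : ∀ i, i ≠ m → i ≠ m' → τu i = k := by
    intro i h1 h2; exact if_neg (by push_neg; exact ⟨h1, h2⟩)
  have huidem : (mk bu τu : ActEnd G n) * mk bu τu = mk bu τu := by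
    apply mk_idem
    · intro i
      by_cases h1 : i = m ∨ i = m'
      · have e1 : τu i = m' := if_pos h1
        rw [e1, hτum']
      · have e1 : τu i = k := if_neg h1
        rw [e1, hτuk]
    · intro i
      by_cases h1 : i = m ∨ i = m'
      · have e1 : τu i = m' := if_pos h1
        rw [e1]; exact hbu1 m' hmm'.symm
      · have e1 : τu i = k := if_neg h1
        rw [e1]; exact hbu1 k hmk.symm
  set u : EI G n := ⟨mk bu τu, huidem⟩ with hu
  set cz : Fin n → G := fun i => c' i * g with hcz
  have hczm' : cz m' = 1 := by show c' m' * g = 1; rw [hc'm', inv_mul_cancel]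
  set z : EI G n := rOneE cz m' hczm' with hz
  have hcondu : u.1 * (rOneE c' m hc').1 = (rOneE c' m hc').1 := by
    rw [hu, rOneE_val, mk_mul]
    apply mk_congr _ (fun i => rfl)
    intro i
    by_cases h1 : i = m
    · subst h1; rw [hbum, hτum, hc'm', mul_inv_cancel, hc']
    · rw [hbu1 i h1, one_mul]
      by_cases h2 : i = m'
      · subst h2; rw [hτum']
      · rw [hτufar i h1 h2, hc'k, hc'far i h1 h2]
  have hprodz : (rOneE c' m hc').1 * u.1 = z.1 := by
    rw [hu, hz, rOneE_val, rOneE_val, mk_mul]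
    exact mk_congr (fun i => by rw [hbum]) (fun i => hτum)
  have h3 : ebar (rOneE c' m hc') * ebar u = ebar z :=
    rel_mul _ _ _ (Or.inr (Or.inr (Or.inl hcondu))) hprodz
  have hcondy : (rOneE d' m' hd').1 * u.1 = (rOneE d' m' hd').1 := by
    rw [hu, rOneE_val, mk_mul]
    exact mk_congr (fun i => by rw [hbu1 m' hmm'.symm, mul_one]) (fun i => hτum')
  have hprody : u.1 * (rOneE d' m' hd').1 = (rOneE d' m' hd').1 := by
    rw [hu, rOneE_val, mk_mul]
    apply mk_congr _ (fun i => rfl)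
    intro i
    by_cases h1 : i = m
    · subst h1; rw [hbum, hτum, hd', hd'm, mul_one]
    · rw [hbu1 i h1, one_mul]
      by_cases h2 : i = m'
      · subst h2; rw [hτum']
      · rw [hτufar i h1 h2, hd'far k hmk.symm hm'k.symm, hd'far i h1 h2]
  have h4 : ebar u * ebar (rOneE d' m' hd') = ebar (rOneE d' m' hd') :=
    rel_mul _ _ _ (Or.inr (Or.inr (Or.inr hcondy))) hprody
  have h5 : ebar z * ebar (rOneE d' m' hd') = ebar z := absorb cz d' m' hczm' hd'
  have h6 : ebar (rOneE a k hak) * ebar z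
      = ebar (rOneE a k hak) * ebar (SE (c k * d m) m') := by
    rw [hz]
    apply free_entries a cz (sVec (c k * d m) m') k m' hak hczm' (sVec_self _ _) hm'k.symm
    show sVec (c k * d m) m' k = c' k * g
    rw [sVec_ne _ hm'k.symm, hc'k, hg]
  calc ebar (rOneE a k hak) * ebar (rOneE c m hc) * ebar (rOneE d m' hd)
      = ebar (rOneE a k hak) * ebar (rOneE c' m hc') * ebar (rOneE d m' hd) := by rw [step1]
    _ = ebar (rOneE a k hak) * (ebar (rOneE c' m hc') * ebar (rOneE d m' hd)) := by
        rw [mul_assoc]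
    _ = ebar (rOneE a k hak) * (ebar (rOneE c' m hc') * ebar (rOneE d' m' hd')) := by
        rw [step2]
    _ = ebar (rOneE a k hak) * (ebar (rOneE c' m hc') * (ebar u * ebar (rOneE d' m' hd'))) := by
        rw [h4]
    _ = ebar (rOneE a k hak) * ((ebar (rOneE c' m hc') * ebar u) * ebar (rOneE d' m' hd')) := by
        rw [mul_assoc]
    _ = ebar (rOneE a k hak) * (ebar z * ebar (rOneE d' m' hd')) := by rw [h3]
    _ = ebar (rOneE a k hak) * ebar z := by rw [h5]
    _ = ebar (rOneE a k hak) * ebar (SE (c k * d m) m') := h6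

/-- Lemma D': three-letter merge with last target k -/
lemma merge_k (c d : Fin n → G) (m : Fin n) (hc : c m = 1) (hd : d k = 1)
    (hlk : l₀ ≠ k) (hmk : m ≠ k) (hml : m ≠ l₀) :
    ebar (rOneE a k hak) * ebar (rOneE c m hc) * ebar (rOneE d k hd)
      = ebar (rOneE a k hak) * ebar (SE (c k * d m) l₀) * ebar (SE 1 k) := by
  set g : G := d m with hg
  set c' : Fin n → G := fun i => if i = m then 1 else if i = l₀ then g⁻¹ else c k with hcdef
  set d' : Fin n → G := fun i => if i = m then g else 1 with hddef
  have hc' : c' m = 1 := if_pos rfl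
  have hd' : d' k = 1 := if_neg hmk.symm
  have hd'l : d' l₀ = 1 := if_neg hml.symm
  have hc'k : c' k = c k := by
    show (if k = m then _ else if k = l₀ then _ else c k) = c k
    rw [if_neg hmk.symm, if_neg hlk.symm]
  have hc'l : c' l₀ = g⁻¹ := by
    show (if l₀ = m then _ else if l₀ = l₀ then g⁻¹ else _) = g⁻¹
    rw [if_neg hml.symm, if_pos rfl]
  have hd'm : d' m = g := if_pos rfl
  have hd'far : ∀ i, i ≠ m → d' i = 1 := fun i h1 => if_neg h1
  have hc'far : ∀ i, i ≠ m → i ≠ l₀ → c' i = c k := by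
    intro i h1 h2; show (if i = m then _ else if i = l₀ then _ else c k) = c k
    rw [if_neg h1, if_neg h2]
  have step1 : ebar (rOneE a k hak) * ebar (rOneE c m hc)
      = ebar (rOneE a k hak) * ebar (rOneE c' m hc') :=
    free_entries a c c' k m hak hc hc' hmk.symm hc'k
  have step2 : ebar (rOneE c' m hc') * ebar (rOneE d k hd)
      = ebar (rOneE c' m hc') * ebar (rOneE d' k hd') :=
    free_entries c' d d' m k hc' hd hd' hmk hd'm
  set bu : Fin n → G := fun i => if i = m then g else 1 with hbudef
  set τu : Fin n → Fin n := fun i => if i = m ∨ i = l₀ then l₀ else k with hτudef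
  have hbum : bu m = g := if_pos rfl
  have hbu1 : ∀ i, i ≠ m → bu i = 1 := fun i h => if_neg h
  have hτum : τu m = l₀ := if_pos (Or.inl rfl)
  have hτul : τu l₀ = l₀ := if_pos (Or.inr rfl)
  have hτuk : τu k = k := if_neg (by push_neg; exact ⟨hmk.symm, hlk.symm⟩)
  have hτufar : ∀ i, i ≠ m → i ≠ l₀ → τu i = k := by
    intro i h1 h2; exact if_neg (by push_neg; exact ⟨h1, h2⟩)
  have huidem : (mk bu τu : ActEnd G n) * mk bu τu = mk bu τu := by
    apply mk_idem
    · intro i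
      by_cases h1 : i = m ∨ i = l₀
      · have e1 : τu i = l₀ := if_pos h1
        rw [e1, hτul]
      · have e1 : τu i = k := if_neg h1
        rw [e1, hτuk]
    · intro i
      by_cases h1 : i = m ∨ i = l₀
      · have e1 : τu i = l₀ := if_pos h1
        rw [e1]; exact hbu1 l₀ hml.symm
      · have e1 : τu i = k := if_neg h1
        rw [e1]; exact hbu1 k hmk.symm
  set u : EI G n := ⟨mk bu τu, huidem⟩ with hu
  set cz : Fin n → G := fun i => c' i * g with hcz
  have hczl : cz l₀ = 1 := by show c' l₀ * g = 1; rw [hc'l, inv_mul_cancel]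
  set z : EI G n := rOneE cz l₀ hczl with hz
  have hcondu : u.1 * (rOneE c' m hc').1 = (rOneE c' m hc').1 := by
    rw [hu, rOneE_val, mk_mul]
    apply mk_congr _ (fun i => rfl)
    intro i
    by_cases h1 : i = m
    · subst h1; rw [hbum, hτum, hc'l, mul_inv_cancel, hc']
    · rw [hbu1 i h1, one_mul]
      by_cases h2 : i = l₀
      · subst h2; rw [hτul]
      · rw [hτufar i h1 h2, hc'k, hc'far i h1 h2]
  have hprodz : (rOneE c' m hc').1 * u.1 = z.1 := by
    rw [hu, hz, rOneE_val, rOneE_val, mk_mul]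
    exact mk_congr (fun i => by rw [hbum]) (fun i => hτum)
  have h3 : ebar (rOneE c' m hc') * ebar u = ebar z :=
    rel_mul _ _ _ (Or.inr (Or.inr (Or.inl hcondu))) hprodz
  have hcondy : (rOneE d' k hd').1 * u.1 = (rOneE d' k hd').1 := by
    rw [hu, rOneE_val, mk_mul]
    exact mk_congr (fun i => by rw [hbu1 k hmk.symm, mul_one]) (fun i => hτuk)
  have hprody : u.1 * (rOneE d' k hd').1 = (rOneE d' k hd').1 := by
    rw [hu, rOneE_val, mk_mul]
    apply mk_congr _ (fun i => rfl)
    intro i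
    by_cases h1 : i = m
    · subst h1; rw [hbum, hτum, hd'l, hd'm, mul_one]
    · rw [hbu1 i h1, one_mul]
      by_cases h2 : i = l₀
      · subst h2; rw [hτul, hd'l]
      · rw [hτufar i h1 h2, hd', hd'far i h1]
  have h4 : ebar u * ebar (rOneE d' k hd') = ebar (rOneE d' k hd') :=
    rel_mul _ _ _ (Or.inr (Or.inr (Or.inr hcondy))) hprody
  have h5 : ebar z * ebar (rOneE d' k hd') = ebar z * ebar (SE 1 k) := by
    apply free_entries cz d' (sVec 1 k) l₀ k hczl hd' (sVec_self 1 k) hlk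
    show sVec 1 k l₀ = d' l₀
    rw [sVec_ne _ hlk, hd'l]
  have h6 : ebar (rOneE a k hak) * ebar z
      = ebar (rOneE a k hak) * ebar (SE (c k * d m) l₀) := by
    rw [hz]
    apply free_entries a cz (sVec (c k * d m) l₀) k l₀ hak hczl (sVec_self _ _) hlk.symm
    show sVec (c k * d m) l₀ k = c' k * g
    rw [sVec_ne _ hlk.symm, hc'k, hg]
  calc ebar (rOneE a k hak) * ebar (rOneE c m hc) * ebar (rOneE d k hd)
      = ebar (rOneE a k hak) * ebar (rOneE c' m hc') * ebar (rOneE d k hd) := by rw [step1]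
    _ = ebar (rOneE a k hak) * (ebar (rOneE c' m hc') * ebar (rOneE d k hd)) := by
        rw [mul_assoc]
    _ = ebar (rOneE a k hak) * (ebar (rOneE c' m hc') * ebar (rOneE d' k hd')) := by
        rw [step2]
    _ = ebar (rOneE a k hak) * (ebar (rOneE c' m hc') * (ebar u * ebar (rOneE d' k hd'))) := by
        rw [h4]
    _ = ebar (rOneE a k hak) * ((ebar (rOneE c' m hc') * ebar u) * ebar (rOneE d' k hd')) := by
        rw [mul_assoc]
    _ = ebar (rOneE a k hak) * (ebar z * ebar (rOneE d' k hd')) := by rw [h3]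
    _ = ebar (rOneE a k hak) * (ebar z * ebar (SE 1 k)) := by rw [h5]
    _ = ebar (rOneE a k hak) * ebar z * ebar (SE 1 k) := by rw [mul_assoc]
    _ = ebar (rOneE a k hak) * ebar (SE (c k * d m) l₀) * ebar (SE 1 k) := by rw [h6]

lemma SE_def (g : G) (m : Fin n) : SE g m = rOneE (sVec g m) m (sVec_self g m) := rfl

/-- the canonical form elements -/
def V (h : G) (m : Fin n) : IG (ActEnd G n) :=
  if m = k then ebar (rOneE a k hak) * ebar (SE h l₀) * ebar (SE 1 k)
  else ebar (rOneE a k hak) * ebar (SE h m)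

lemma V_of_ne (h : G) {m : Fin n} (hm : m ≠ k) :
    V a k l₀ hak h m = ebar (rOneE a k hak) * ebar (SE h m) := if_neg hm

lemma V_of_k (h : G) :
    V a k l₀ hak h k = ebar (rOneE a k hak) * ebar (SE h l₀) * ebar (SE 1 k) := if_pos rfl

/-- Lemma D'': three-letter merge, first target l₀, second target k -/
lemma merge_l (c d : Fin n → G) (hc : c l₀ = 1) (hd : d k = 1) (hlk : l₀ ≠ k)
    (hjk : j ≠ k) (hjl : j ≠ l₀) :
    ebar (rOneE a k hak) * ebar (rOneE c l₀ hc) * ebar (rOneE d k hd)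
      = ebar (rOneE a k hak) * ebar (SE (c k * d l₀) l₀) * ebar (SE 1 k) := by
  set dp : Fin n → G := fun i => d i * (d j)⁻¹ with hdp
  have hdpj : dp j = 1 := by show d j * (d j)⁻¹ = 1; rw [mul_inv_cancel]
  set p : EI G n := rOneE dp j hdpj with hp
  have hins : ebar p * ebar (rOneE d k hd) = ebar (rOneE d k hd) := by
    have key : p.1 * (rOneE d k hd).1 = (rOneE d k hd).1 := by
      rw [hp, rOneE_val, rOneE_val, mk_mul]
      exact mk_congr (fun i => inv_mul_cancel_right (d i) (d j)) (fun i => rfl)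
    exact rel_mul _ _ _ (Or.inr (Or.inl key)) key
  have hmg := merge_gen a k hak c dp l₀ j hc hdpj hlk hjk hjl.symm
  have hmk2 := merge_k a k l₀ hak (sVec (c k * dp l₀) j) d j (sVec_self _ _) hd hlk hjk hjl
  have harith : sVec (c k * dp l₀) j k * d j = c k * d l₀ := by
    rw [sVec_ne _ hjk.symm]
    show c k * (d l₀ * (d j)⁻¹) * d j = c k * d l₀
    rw [mul_assoc, inv_mul_cancel_right]
  calc ebar (rOneE a k hak) * ebar (rOneE c l₀ hc) * ebar (rOneE d k hd)
      = ebar (rOneE a k hak) * ebar (rOneE c l₀ hc) * (ebar p * ebar (rOneE d k hd)) := by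
        rw [hins]
    _ = ebar (rOneE a k hak) * ebar (rOneE c l₀ hc) * ebar p * ebar (rOneE d k hd) := by
        rw [mul_assoc (ebar (rOneE a k hak) * ebar (rOneE c l₀ hc))]
    _ = ebar (rOneE a k hak) * ebar (SE (c k * dp l₀) j) * ebar (rOneE d k hd) := by
        rw [hmg]
    _ = ebar (rOneE a k hak) * ebar (rOneE (sVec (c k * dp l₀) j) j (sVec_self _ _))
          * ebar (rOneE d k hd) := by rw [SE_def]
    _ = ebar (rOneE a k hak) * ebar (SE (sVec (c k * dp l₀) j k * d j) l₀) * ebar (SE 1 k) :=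
        hmk2
    _ = ebar (rOneE a k hak) * ebar (SE (c k * d l₀) l₀) * ebar (SE 1 k) := by rw [harith]

/-- Lemma D (full): merging a rank-one letter into a canonical form -/
lemma merge_full (c d : Fin n → G) (m m' : Fin n) (hc : c m = 1) (hd : d m' = 1)
    (hmk : m ≠ k) (hlk : l₀ ≠ k) (hjk : j ≠ k) (hjl : j ≠ l₀) :
    ebar (rOneE a k hak) * ebar (rOneE c m hc) * ebar (rOneE d m' hd)
      = V a k l₀ hak (c k * d m) m' := by
  by_cases hm'm : m' = m
  · subst hm'm
    have h1 : ebar (rOneE c m' hc) * ebar (rOneE d m' hd) = ebar (rOneE c m' hc) :=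
      absorb c d m' hc hd
    have h2 : ebar (rOneE a k hak) * ebar (rOneE c m' hc)
        = ebar (rOneE a k hak) * ebar (SE (c k) m') := by
      rw [SE_def]
      apply free_entries a c (sVec (c k) m') k m' hak hc (sVec_self _ _) hmk.symm
      rw [sVec_ne _ hmk.symm]
    rw [mul_assoc, h1, h2, V_of_ne a k l₀ hak _ hmk, hd, mul_one]
  · by_cases hm'k : m' = k
    · have hm'k' : k = m' := hm'k.symm
      subst hm'k'
      by_cases hml : m = l₀
      · have hml' : l₀ = m := hml.symm
        subst hml'
        rw [V_of_k, ← merge_l a k l₀ j hak c d hc hd hlk hjk hjl]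
      · rw [V_of_k, ← merge_k a k l₀ hak c d m hc hd hlk hmk hml]
    · rw [V_of_ne a k l₀ hak _ hm'k, ← merge_gen a k hak c d m m' hc hd hmk hm'k
        (fun h => hm'm h.symm)]

lemma sVec_one (m i : Fin n) : sVec (1:G) m i = 1 := by
  unfold sVec; split <;> rfl

/-- Lemma E: absorbing a rank-one letter after a canonical form with target k -/
lemma tailk (h : G) (d : Fin n → G) (m' : Fin n) (hd : d m' = 1)
    (hlk : l₀ ≠ k) (hjk : j ≠ k) (hjl : j ≠ l₀) :
    ebar (rOneE a k hak) * ebar (SE h l₀) * ebar (SE 1 k) * ebar (rOneE d m' hd)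
      = V a k l₀ hak (h * d k) m' := by
  by_cases hm'k : m' = k
  · have hm'k' : k = m' := hm'k.symm
    subst hm'k'
    have habs : ebar (SE 1 k) * ebar (rOneE d k hd) = ebar (SE 1 k) := by
      rw [SE_def]; exact absorb _ _ _ _ hd
    rw [mul_assoc, habs, V_of_k, hd, mul_one]
  · -- first re-pivot T_k using a singularizer
    by_cases hm'l : m' = l₀
    · -- m' = l₀ : pivot through j
      have hm'l' : l₀ = m' := hm'l.symm
      subst hm'l'
      set y' : Fin n → G := fun i => if i = l₀ then 1 else d k with hy'def
      have hy' : y' l₀ = 1 := if_pos rfl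
      have hy'k : y' k = d k := if_neg (fun hh => hm'k hh.symm)
      have hy'far : ∀ i, i ≠ l₀ → y' i = d k := fun i hi => if_neg hi
      have fe1 : ebar (SE 1 k) * ebar (rOneE d l₀ hd)
          = ebar (SE 1 k) * ebar (rOneE y' l₀ hy') := by
        rw [SE_def]
        apply free_entries (sVec 1 k) d y' k l₀ (sVec_self 1 k) hd hy' hlk.symm
        rw [hy'k]
      set τu : Fin n → Fin n := fun i => if i = l₀ then l₀ else j with hτudef
      have hτul : τu l₀ = l₀ := if_pos rfl
      have hτuk : τu k = j := if_neg hlk.symm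
      have hτufar : ∀ i, i ≠ l₀ → τu i = j := fun i hi => if_neg hi
      have huidem : (mk (fun _ => (1:G)) τu : ActEnd G n) * mk (fun _ => (1:G)) τu
          = mk (fun _ => (1:G)) τu := by
        apply mk_idem
        · intro i
          by_cases h1 : i = l₀
          · have e1 : τu i = l₀ := if_pos h1
            rw [e1, hτul]
          · have e1 : τu i = j := if_neg h1
            rw [e1, hτufar j hjl]
        · intro i; rfl
      set u : EI G n := ⟨mk (fun _ => (1:G)) τu, huidem⟩ with hu
      have hTu : ebar (SE 1 k) * ebar u = ebar (SE 1 j) := by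
        have hcond : u.1 * (SE 1 k).1 = (SE 1 k).1 := by
          rw [hu, SE_def, rOneE_val, mk_mul]
          exact mk_congr (fun i => by rw [sVec_one, sVec_one, mul_one]) (fun i => rfl)
        have hprod : (SE 1 k).1 * u.1 = (SE 1 j).1 := by
          rw [hu, SE_def, SE_def, rOneE_val, rOneE_val, mk_mul]
          exact mk_congr (fun i => by rw [sVec_one, sVec_one, mul_one]) (fun i => hτuk)
        exact rel_mul _ _ _ (Or.inr (Or.inr (Or.inl hcond))) hprod
      have hUy : ebar u * ebar (rOneE y' l₀ hy') = ebar (rOneE y' l₀ hy') := by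
        have hcond : (rOneE y' l₀ hy').1 * u.1 = (rOneE y' l₀ hy').1 := by
          rw [hu, rOneE_val, mk_mul]
          exact mk_congr (fun i => by rw [mul_one]) (fun i => hτul)
        have hprod : u.1 * (rOneE y' l₀ hy').1 = (rOneE y' l₀ hy').1 := by
          rw [hu, rOneE_val, mk_mul]
          apply mk_congr _ (fun i => rfl)
          intro i
          rw [one_mul]
          by_cases h1 : i = l₀
          · rw [h1, hτul]
          · rw [hτufar i h1, hy'far j hjl, hy'far i h1]
        exact rel_mul _ _ _ (Or.inr (Or.inr (Or.inr hcond))) hprod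
      have hmf1 : ebar (rOneE a k hak) * ebar (SE h l₀) * ebar (SE 1 j)
          = ebar (rOneE a k hak) * ebar (SE h j) := by
        rw [SE_def, SE_def, merge_full a k l₀ j hak (sVec h l₀) (sVec 1 j) l₀ j
          (sVec_self _ _) (sVec_self _ _) hlk hlk hjk hjl,
          sVec_ne h hlk.symm, sVec_one, mul_one, V_of_ne a k l₀ hak _ hjk, SE_def]
      have hmf2 : ebar (rOneE a k hak) * ebar (SE h j) * ebar (rOneE y' l₀ hy')
          = V a k l₀ hak (h * d k) l₀ := by
        rw [SE_def, merge_full a k l₀ j hak (sVec h j) y' j l₀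
          (sVec_self _ _) hy' hjk hlk hjk hjl, sVec_ne h hjk.symm, hy'far j hjl]
      calc ebar (rOneE a k hak) * ebar (SE h l₀) * ebar (SE 1 k) * ebar (rOneE d l₀ hd)
          = ebar (rOneE a k hak) * ebar (SE h l₀) * (ebar (SE 1 k) * ebar (rOneE d l₀ hd)) := by
            rw [mul_assoc]
        _ = ebar (rOneE a k hak) * ebar (SE h l₀) * (ebar (SE 1 k) * ebar (rOneE y' l₀ hy')) := by
            rw [fe1]
        _ = ebar (rOneE a k hak) * ebar (SE h l₀)
              * (ebar (SE 1 k) * (ebar u * ebar (rOneE y' l₀ hy'))) := by rw [hUy]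
        _ = ebar (rOneE a k hak) * ebar (SE h l₀)
              * ((ebar (SE 1 k) * ebar u) * ebar (rOneE y' l₀ hy')) := by
            simp only [mul_assoc]
        _ = ebar (rOneE a k hak) * ebar (SE h l₀)
              * (ebar (SE 1 j) * ebar (rOneE y' l₀ hy')) := by rw [hTu]
        _ = ebar (rOneE a k hak) * ebar (SE h l₀) * ebar (SE 1 j) * ebar (rOneE y' l₀ hy') := by
            rw [mul_assoc (ebar (rOneE a k hak) * ebar (SE h l₀))]
        _ = ebar (rOneE a k hak) * ebar (SE h j) * ebar (rOneE y' l₀ hy') := by rw [hmf1]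
        _ = V a k l₀ hak (h * d k) l₀ := hmf2
    · -- m' ∉ {k, l₀} : pivot through l₀
      set y' : Fin n → G := fun i => if i = m' then 1 else d k with hy'def
      have hy' : y' m' = 1 := if_pos rfl
      have hy'k : y' k = d k := if_neg (fun hh => hm'k hh.symm)
      have hy'far : ∀ i, i ≠ m' → y' i = d k := fun i hi => if_neg hi
      have fe1 : ebar (SE 1 k) * ebar (rOneE d m' hd)
          = ebar (SE 1 k) * ebar (rOneE y' m' hy') := by
        rw [SE_def]
        apply free_entries (sVec 1 k) d y' k m' (sVec_self 1 k) hd hy' (fun hh => hm'k hh.symm)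
        rw [hy'k]
      set τu : Fin n → Fin n := fun i => if i = m' then m' else l₀ with hτudef
      have hτum' : τu m' = m' := if_pos rfl
      have hτuk : τu k = l₀ := if_neg (fun hh => hm'k hh.symm)
      have hτul : τu l₀ = l₀ := if_neg (fun hh => hm'l hh.symm)
      have hτufar : ∀ i, i ≠ m' → τu i = l₀ := fun i hi => if_neg hi
      have huidem : (mk (fun _ => (1:G)) τu : ActEnd G n) * mk (fun _ => (1:G)) τu
          = mk (fun _ => (1:G)) τu := by
        apply mk_idem
        · intro i
          by_cases h1 : i = m'
          · have e1 : τu i = m' := if_pos h1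
            rw [e1, hτum']
          · have e1 : τu i = l₀ := if_neg h1
            rw [e1, hτul]
        · intro i; rfl
      set u : EI G n := ⟨mk (fun _ => (1:G)) τu, huidem⟩ with hu
      have hTu : ebar (SE 1 k) * ebar u = ebar (SE 1 l₀) := by
        have hcond : u.1 * (SE 1 k).1 = (SE 1 k).1 := by
          rw [hu, SE_def, rOneE_val, mk_mul]
          exact mk_congr (fun i => by rw [sVec_one, sVec_one, mul_one]) (fun i => rfl)
        have hprod : (SE 1 k).1 * u.1 = (SE 1 l₀).1 := by
          rw [hu, SE_def, SE_def, rOneE_val, rOneE_val, mk_mul]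
          exact mk_congr (fun i => by rw [sVec_one, sVec_one, mul_one]) (fun i => hτuk)
        exact rel_mul _ _ _ (Or.inr (Or.inr (Or.inl hcond))) hprod
      have hUy : ebar u * ebar (rOneE y' m' hy') = ebar (rOneE y' m' hy') := by
        have hcond : (rOneE y' m' hy').1 * u.1 = (rOneE y' m' hy').1 := by
          rw [hu, rOneE_val, mk_mul]
          exact mk_congr (fun i => by rw [mul_one]) (fun i => hτum')
        have hprod : u.1 * (rOneE y' m' hy').1 = (rOneE y' m' hy').1 := by
          rw [hu, rOneE_val, mk_mul]
          apply mk_congr _ (fun i => rfl)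
          intro i
          rw [one_mul]
          by_cases h1 : i = m'
          · rw [h1, hτum']
          · rw [hτufar i h1, hy'far l₀ (fun hh => hm'l hh.symm), hy'far i h1]
        exact rel_mul _ _ _ (Or.inr (Or.inr (Or.inr hcond))) hprod
      have habs : ebar (SE h l₀) * ebar (SE 1 l₀) = ebar (SE h l₀) := by
        rw [SE_def, SE_def]; exact absorb _ _ _ _ (sVec_self 1 l₀)
      have hmf2 : ebar (rOneE a k hak) * ebar (SE h l₀) * ebar (rOneE y' m' hy')
          = V a k l₀ hak (h * d k) m' := by
        rw [SE_def, merge_full a k l₀ j hak (sVec h l₀) y' l₀ m'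
          (sVec_self _ _) hy' hlk hlk hjk hjl, sVec_ne h hlk.symm,
          hy'far l₀ (fun hh => hm'l hh.symm)]
      calc ebar (rOneE a k hak) * ebar (SE h l₀) * ebar (SE 1 k) * ebar (rOneE d m' hd)
          = ebar (rOneE a k hak) * ebar (SE h l₀) * (ebar (SE 1 k) * ebar (rOneE d m' hd)) := by
            rw [mul_assoc]
        _ = ebar (rOneE a k hak) * ebar (SE h l₀) * (ebar (SE 1 k) * ebar (rOneE y' m' hy')) := by
            rw [fe1]
        _ = ebar (rOneE a k hak) * ebar (SE h l₀)
              * (ebar (SE 1 k) * (ebar u * ebar (rOneE y' m' hy'))) := by rw [hUy]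
        _ = ebar (rOneE a k hak) * ebar (SE h l₀)
              * ((ebar (SE 1 k) * ebar u) * ebar (rOneE y' m' hy')) := by
            simp only [mul_assoc]
        _ = ebar (rOneE a k hak) * ebar (SE h l₀)
              * (ebar (SE 1 l₀) * ebar (rOneE y' m' hy')) := by rw [hTu]
        _ = ebar (rOneE a k hak) * (ebar (SE h l₀) * ebar (SE 1 l₀)) * ebar (rOneE y' m' hy') := by
            simp only [mul_assoc]
        _ = ebar (rOneE a k hak) * ebar (SE h l₀) * ebar (rOneE y' m' hy') := by rw [habs]
        _ = V a k l₀ hak (h * d k) m' := hmf2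

lemma sVec_bf (w : EI G n) (m : Fin n) :
    sVec (bf w.1 m) (tf w.1 m) m = bf w.1 m := by
  by_cases hh : m = tf w.1 m
  · have h1 : bf w.1 m = 1 := by
      conv_lhs => rw [hh]
      exact idem_bf w.2 m
    show (if m = tf w.1 m then 1 else _) = bf w.1 m
    rw [if_pos hh, h1]
  · exact sVec_ne _ hh

/-- The step lemma: right multiplication by any generator moves between
canonical forms. -/
lemma step (hlk : l₀ ≠ k) (hjk : j ≠ k) (hjl : j ≠ l₀) (h : G) (m : Fin n) (w : EI G n) :
    V a k l₀ hak h m * ebar w = V a k l₀ hak (h * bf w.1 m) (tf w.1 m) := by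
  by_cases hm : m = k
  · have hm' : k = m := hm.symm
    subst hm'
    rw [V_of_k]
    have hls := letter_step (sVec 1 k) k (sVec_self 1 k) w
    calc ebar (rOneE a k hak) * ebar (SE h l₀) * ebar (SE 1 k) * ebar w
        = ebar (rOneE a k hak) * ebar (SE h l₀)
            * (ebar (rOneE (sVec 1 k) k (sVec_self 1 k)) * ebar w) := by
          rw [SE_def 1 k]; simp only [mul_assoc]
      _ = ebar (rOneE a k hak) * ebar (SE h l₀)
            * (ebar (rOneE (sVec 1 k) k (sVec_self 1 k))
              * ebar (SE (bf w.1 k) (tf w.1 k))) := by rw [hls]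
      _ = ebar (rOneE a k hak) * ebar (SE h l₀) * ebar (SE 1 k)
            * ebar (rOneE (sVec (bf w.1 k) (tf w.1 k)) (tf w.1 k) (sVec_self _ _)) := by
          rw [← SE_def 1 k, ← SE_def (bf w.1 k) (tf w.1 k)]; simp only [mul_assoc]
      _ = V a k l₀ hak (h * sVec (bf w.1 k) (tf w.1 k) k) (tf w.1 k) :=
          tailk a k l₀ j hak h (sVec (bf w.1 k) (tf w.1 k)) (tf w.1 k)
            (sVec_self _ _) hlk hjk hjl
      _ = V a k l₀ hak (h * bf w.1 k) (tf w.1 k) := by rw [sVec_bf]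
  · rw [V_of_ne a k l₀ hak _ hm]
    have hls := letter_step (sVec h m) m (sVec_self h m) w
    calc ebar (rOneE a k hak) * ebar (SE h m) * ebar w
        = ebar (rOneE a k hak)
            * (ebar (rOneE (sVec h m) m (sVec_self h m)) * ebar w) := by
          rw [SE_def]; simp only [mul_assoc]
      _ = ebar (rOneE a k hak) * (ebar (rOneE (sVec h m) m (sVec_self h m))
            * ebar (SE (bf w.1 m) (tf w.1 m))) := by rw [hls]
      _ = ebar (rOneE a k hak) * ebar (rOneE (sVec h m) m (sVec_self h m))
            * ebar (rOneE (sVec (bf w.1 m) (tf w.1 m)) (tf w.1 m) (sVec_self _ _)) := by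
          rw [← SE_def (bf w.1 m) (tf w.1 m)]; simp only [mul_assoc]
      _ = V a k l₀ hak (sVec h m k * sVec (bf w.1 m) (tf w.1 m) m) (tf w.1 m) :=
          merge_full a k l₀ j hak (sVec h m) (sVec (bf w.1 m) (tf w.1 m)) m (tf w.1 m)
            (sVec_self h m) (sVec_self _ _) hm hlk hjk hjl
      _ = V a k l₀ hak (h * bf w.1 m) (tf w.1 m) := by
          rw [sVec_bf, sVec_ne h (fun hh => hm hh.symm)]

lemma bf_mk (b : Fin n → G) (τ : Fin n → Fin n) (i : Fin n) : bf (mk b τ) i = b i :=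
  one_mul _

lemma tf_mk (b : Fin n → G) (τ : Fin n → Fin n) (i : Fin n) : tf (mk b τ) i = τ i := rfl

/-- every element reachable from a canonical form is canonical -/
lemma reach (hlk : l₀ ≠ k) (hjk : j ≠ k) (hjl : j ≠ l₀) (x : IG (ActEnd G n)) (h : G)
    (m : Fin n) : ∃ h' m', V a k l₀ hak h m * x = V a k l₀ hak h' m' := by
  obtain ⟨f, rfl⟩ := Con.mk'_surjective (c := conGen (igRel (ActEnd G n))) x
  induction f using FreeMonoid.inductionOn' generalizing h m with
  | one =>
    refine ⟨h, m, ?_⟩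
    rw [map_one, mul_one]
  | of_mul b bs ih =>
    rw [map_mul, ← mul_assoc]
    have hb : (conGen (igRel (ActEnd G n))).mk' (FreeMonoid.of b) = ebar b := rfl
    rw [hb, step a k l₀ j hak hlk hjk hjl]
    exact ih _ _

lemma pr_V (hlk : l₀ ≠ k) (h : G) (m : Fin n) :
    pr (V a k l₀ hak h m) = mk (fun i => a i * h) (fun _ => m) := by
  by_cases hm : m = k
  · have hm' : k = m := hm.symm
    subst hm'
    rw [V_of_k, map_mul, map_mul, pr_ebar, pr_ebar, pr_ebar, SE_def, SE_def,
      rOneE_val, rOneE_val, rOneE_val, mk_mul, mk_mul]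
    exact mk_congr (fun i => by
      rw [sVec_ne h hlk.symm, sVec_one, mul_one]) (fun i => rfl)
  · rw [V_of_ne a k l₀ hak _ hm, map_mul, pr_ebar, pr_ebar, SE_def, rOneE_val,
      rOneE_val, mk_mul]
    exact mk_congr (fun i => by rw [sVec_ne h (fun hh => hm hh.symm)]) (fun i => rfl)

lemma base : V a k l₀ hak 1 k = ebar (rOneE a k hak) := by
  have h1 : ebar (SE (1:G) l₀) * ebar (SE 1 k) = ebar (SE 1 k) := by
    have key : (SE (1:G) l₀).1 * (SE 1 k).1 = (SE 1 k).1 := by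
      rw [SE_def, SE_def, rOneE_val, rOneE_val, mk_mul]
      exact mk_congr (fun i => by rw [sVec_one, sVec_one, sVec_one, mul_one]) (fun i => rfl)
    exact rel_mul _ _ _ (Or.inr (Or.inl key)) key
  have h2 : ebar (rOneE a k hak) * ebar (SE 1 k) = ebar (rOneE a k hak) := by
    have key : (rOneE a k hak).1 * (SE (1:G) k).1 = (rOneE a k hak).1 := by
      rw [SE_def, rOneE_val, rOneE_val, mk_mul]
      exact mk_congr (fun i => by rw [sVec_one, mul_one]) (fun i => rfl)
    exact rel_mul _ _ _ (Or.inl key) key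
  rw [V_of_k, mul_assoc, h1, h2]

lemma V_mul_eE (hlk : l₀ ≠ k) (hjk : j ≠ k) (hjl : j ≠ l₀) (h : G) :
    V a k l₀ hak h k * ebar (rOneE a k hak) = V a k l₀ hak h k := by
  rw [step a k l₀ j hak hlk hjk hjl]
  rw [rOneE_val, bf_mk, tf_mk, hak, mul_one]

lemma V_mul_V (hlk : l₀ ≠ k) (hjk : j ≠ k) (hjl : j ≠ l₀) (h h' : G) :
    V a k l₀ hak h k * V a k l₀ hak h' k = V a k l₀ hak (h * h') k := by
  rw [V_of_k a k l₀ hak h']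
  calc V a k l₀ hak h k * (ebar (rOneE a k hak) * ebar (SE h' l₀) * ebar (SE 1 k))
      = V a k l₀ hak h k * ebar (rOneE a k hak) * ebar (SE h' l₀) * ebar (SE 1 k) := by
        simp only [mul_assoc]
    _ = V a k l₀ hak h k * ebar (SE h' l₀) * ebar (SE 1 k) := by
        rw [V_mul_eE a k l₀ j hak hlk hjk hjl]
    _ = V a k l₀ hak (h * h') l₀ * ebar (SE 1 k) := by
        rw [step a k l₀ j hak hlk hjk hjl, SE_def, rOneE_val, bf_mk, tf_mk,
          sVec_ne h' hlk.symm]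
    _ = V a k l₀ hak (h * h') k := by
        rw [step a k l₀ j hak hlk hjk hjl, SE_def, rOneE_val, bf_mk, tf_mk,
          sVec_one, mul_one]

end Fixed

/- general monoid facts about principal ideals -/
section Ideals

variable {M : Type*} [Monoid M] {x y : M}

lemma lIdeal_eq' (h1 : ∃ p, p * y = x) (h2 : ∃ q, q * x = y) : lIdeal x = lIdeal y := by
  obtain ⟨p, hp⟩ := h1
  obtain ⟨q, hq⟩ := h2
  apply Set.eq_of_subset_of_subset
  · rintro z ⟨m, rfl⟩
    exact ⟨m * p, by dsimp only; rw [mul_assoc, hp]⟩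
  · rintro z ⟨m, rfl⟩
    exact ⟨m * q, by dsimp only; rw [mul_assoc, hq]⟩

lemma rIdeal_eq' (h1 : ∃ p, y * p = x) (h2 : ∃ q, x * q = y) : rIdeal x = rIdeal y := by
  obtain ⟨p, hp⟩ := h1
  obtain ⟨q, hq⟩ := h2
  apply Set.eq_of_subset_of_subset
  · rintro z ⟨m, rfl⟩
    exact ⟨p * m, by dsimp only; rw [← mul_assoc, hp]⟩
  · rintro z ⟨m, rfl⟩
    exact ⟨q * m, by dsimp only; rw [← mul_assoc, hq]⟩

lemma mem_of_lIdeal_eq (h : lIdeal x = lIdeal y) : ∃ q, q * y = x := by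
  have : x ∈ lIdeal y := h ▸ ⟨1, one_mul x⟩
  exact this

lemma mem_of_rIdeal_eq (h : rIdeal x = rIdeal y) : ∃ q, y * q = x := by
  have : x ∈ rIdeal y := h ▸ ⟨1, mul_one x⟩
  exact this

end Ideals

section Main

variable (a : Fin n → G) (k l₀ j : Fin n) (hak : a k = 1)

lemma hmem (hlk : l₀ ≠ k) (hjk : j ≠ k) (hjl : j ≠ l₀) (h : G) :
    V a k l₀ hak h k ∈ hClass (ebar (rOneE a k hak)) := by
  constructor
  · apply lIdeal_eq'
    · exact ⟨V a k l₀ hak h k, V_mul_eE a k l₀ j hak hlk hjk hjl h⟩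
    · refine ⟨V a k l₀ hak h⁻¹ k, ?_⟩
      rw [V_mul_V a k l₀ j hak hlk hjk hjl, inv_mul_cancel, base]
  · apply rIdeal_eq'
    · refine ⟨ebar (SE h l₀) * ebar (SE 1 k), ?_⟩
      rw [V_of_k]
      simp only [mul_assoc]
    · refine ⟨V a k l₀ hak h⁻¹ k, ?_⟩
      rw [V_mul_V a k l₀ j hak hlk hjk hjl, mul_inv_cancel, base]

lemma hchar (hlk : l₀ ≠ k) (hjk : j ≠ k) (hjl : j ≠ l₀) (w : IG (ActEnd G n))
    (hw : w ∈ hClass (ebar (rOneE a k hak))) : ∃ h, w = V a k l₀ hak h k := by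
  obtain ⟨hL, hR⟩ := hw
  obtain ⟨r, hr⟩ := mem_of_rIdeal_eq hR
  obtain ⟨h', m', hVm⟩ := reach a k l₀ j hak hlk hjk hjl r 1 k
  rw [base] at hVm
  have hw' : w = V a k l₀ hak h' m' := by rw [← hr, hVm]
  obtain ⟨q, hq⟩ := mem_of_lIdeal_eq hL.symm
  have hpr : pr q * pr w = mk a (fun _ => k) := by
    rw [← map_mul, hq, pr_ebar, rOneE_val]
  rw [hw', pr_V a k l₀ hak hlk, eq_mk (pr q), mk_mul] at hpr
  have hm'k : m' = k := (mk_inj hpr).2 k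
  exact ⟨h', by rw [hw', hm'k]⟩

/-- the bijection -/
def phi : IG (ActEnd G n) → G := fun x => bf (pr x) k

lemma phi_V (hlk : l₀ ≠ k) (h : G) : phi k (V a k l₀ hak h k) = h := by
  show bf (pr (V a k l₀ hak h k)) k = h
  rw [pr_V a k l₀ hak hlk h k, bf_mk, hak, one_mul]

theorem master (hlk : l₀ ≠ k) (hjk : j ≠ k) (hjl : j ≠ l₀) :
    (∀ w ∈ hClass (ebar (rOneE a k hak)), ∀ w' ∈ hClass (ebar (rOneE a k hak)),
        w * w' ∈ hClass (ebar (rOneE a k hak))) ∧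
    ∃ φ : IG (ActEnd G n) → G,
      Set.BijOn φ (hClass (ebar (rOneE a k hak))) Set.univ ∧
      (∀ w ∈ hClass (ebar (rOneE a k hak)), ∀ w' ∈ hClass (ebar (rOneE a k hak)),
        φ (w * w') = φ w * φ w') ∧
      φ (ebar (rOneE a k hak)) = 1 := by
  constructor
  · intro w hw w' hw'
    obtain ⟨h, rfl⟩ := hchar a k l₀ j hak hlk hjk hjl w hw
    obtain ⟨h', rfl⟩ := hchar a k l₀ j hak hlk hjk hjl w' hw'
    rw [V_mul_V a k l₀ j hak hlk hjk hjl]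
    exact hmem a k l₀ j hak hlk hjk hjl _
  · refine ⟨phi k, ⟨fun _ _ => trivial, ?_, ?_⟩, ?_, ?_⟩
    · intro w hw w' hw' heq
      obtain ⟨h, rfl⟩ := hchar a k l₀ j hak hlk hjk hjl w hw
      obtain ⟨h', rfl⟩ := hchar a k l₀ j hak hlk hjk hjl w' hw'
      rw [phi_V a k l₀ hak hlk, phi_V a k l₀ hak hlk] at heq
      rw [heq]
    · intro g _
      exact ⟨V a k l₀ hak g k, hmem a k l₀ j hak hlk hjk hjl g, phi_V a k l₀ hak hlk g⟩
    · intro w hw w' hw'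
      obtain ⟨h, rfl⟩ := hchar a k l₀ j hak hlk hjk hjl w hw
      obtain ⟨h', rfl⟩ := hchar a k l₀ j hak hlk hjk hjl w' hw'
      rw [V_mul_V a k l₀ j hak hlk hjk hjl, phi_V a k l₀ hak hlk,
        phi_V a k l₀ hak hlk, phi_V a k l₀ hak hlk]
    · rw [← base a k l₀ hak, phi_V a k l₀ hak hlk]

end Main

lemma exists_other (hn : 3 ≤ n) (x y : Fin n) : ∃ z : Fin n, z ≠ x ∧ z ≠ y := by
  by_contra hcon
  push_neg at hcon
  have hsub : (Finset.univ : Finset (Fin n)) ⊆ {x, y} := by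
    intro z _
    simp only [Finset.mem_insert, Finset.mem_singleton]
    rcases eq_or_ne z x with h | h
    · exact Or.inl h
    · exact Or.inr (hcon z h)
  have h1 := Finset.card_le_card hsub
  rw [Finset.card_univ, Fintype.card_fin] at h1
  have h2 : ({x, y} : Finset (Fin n)).card ≤ 2 :=
    le_trans (Finset.card_insert_le _ _) (by simp)
  omega

end S19

/-- For any group `G`, `n ≥ 3` and any rank-1 idempotent `e` of `End F_n(G)`,
the `H`-class of `ē` in `IG(E)` is closed under multiplication, and there is a
bijection `φ` from it onto `G` that is multiplicative and sends `ē` to `1`: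
the maximal subgroup of `IG(E)` at `ē` is isomorphic to `G`.  Thus every group
arises as a maximal subgroup of the free idempotent generated semigroup over
the biordered set of idempotents of the endomorphism monoid of a finite-rank
free group act. -/
theorem stmt19 {G : Type*} [Group G] {n : ℕ} (hn : 3 ≤ n)
    (e : ActEnd G n) (he : e * e = e) (hre : ActEnd.rank e = 1) :
    (∀ w ∈ hClass (ebar ⟨e, he⟩), ∀ w' ∈ hClass (ebar ⟨e, he⟩),
        w * w' ∈ hClass (ebar ⟨e, he⟩)) ∧
    ∃ φ : IG (ActEnd G n) → G,
      Set.BijOn φ (hClass (ebar ⟨e, he⟩)) Set.univ ∧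
      (∀ w ∈ hClass (ebar ⟨e, he⟩), ∀ w' ∈ hClass (ebar ⟨e, he⟩),
        φ (w * w') = φ w * φ w') ∧
      φ (ebar ⟨e, he⟩) = 1 := by
  have hsub : Subsingleton {j : Fin n // ∃ x, (e.toFun x).2 = j} :=
    (Nat.card_eq_one_iff_unique.mp hre).1
  have i0 : Fin n := ⟨0, by omega⟩
  have hconst : ∀ i, S19.tf e i = S19.tf e i0 := by
    intro i
    have h1 : (⟨S19.tf e i, ⟨((1:G), i), rfl⟩⟩ : {j : Fin n // ∃ x, (e.toFun x).2 = j})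
        = ⟨S19.tf e i0, ⟨((1:G), i0), rfl⟩⟩ := Subsingleton.elim _ _
    exact congrArg Subtype.val h1
  have hak : S19.bf e (S19.tf e i0) = 1 := S19.idem_bf he i0
  have hE : (⟨e, he⟩ : {e : ActEnd G n // e * e = e})
      = S19.rOneE (S19.bf e) (S19.tf e i0) hak := by
    apply Subtype.ext
    rw [S19.rOneE_val]
    calc e = S19.mk (S19.bf e) (S19.tf e) := S19.eq_mk e
      _ = S19.mk (S19.bf e) (fun _ => S19.tf e i0) := S19.mk_congr (fun _ => rfl) hconst
  obtain ⟨l₀, hl1, -⟩ := S19.exists_other hn (S19.tf e i0) (S19.tf e i0)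
  obtain ⟨j, hjk, hjl⟩ := S19.exists_other hn (S19.tf e i0) l₀
  rw [hE]
  exact S19.master (S19.bf e) (S19.tf e i0) l₀ j hak hl1 hjk hjl
end
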